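/- arXiv:2107.13867 — 9 statements merged into one kernel-verified Lean document; each statement's English description precedes it below -/
import Mathlib

section
/- Let -π/2 < γ < π/2 and 0 ≤ α < 1. For every f ∈ S_γ(α) with Taylor expansion f(z) = z + a₂z² + a₃z³ + ⋯, one has -1 ≤ |a₂| - 1 ≤ 2(1-α)cos γ - 1; equivalently, |a₂| ≤ 2(1-α)cos γ. -/
open Complex Metric Real

/-- For `-π/2 < γ < π/2`, `0 ≤ α < 1` and `f ∈ S_γ(α)` with
Taylor expansion `f(z) = z + a₂ z² + ⋯`, one has
`-1 ≤ |a₂| - 1 ≤ 2(1-α) cos γ - 1`. Here `a₂ = f''(0)/2 = iteratedDeriv 2 f 0 / 2`. -/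
theorem stmt_0 (γ α : ℝ) (hγ₁ : -(π / 2) < γ) (hγ₂ : γ < π / 2)
    (hα₁ : 0 ≤ α) (hα₂ : α < 1)
    (f : ℂ → ℂ) (hf : AnalyticOnNhd ℂ f (ball 0 1))
    (hf0 : f 0 = 0) (hf1 : deriv f 0 = 1)
    (hfz : ∀ z ∈ ball (0 : ℂ) 1, z ≠ 0 → f z ≠ 0)
    (hre : ∀ z ∈ ball (0 : ℂ) 1, z ≠ 0 →
      α * Real.cos γ < (Complex.exp (-(↑γ * Complex.I)) * (z * deriv f z / f z)).re) :
    -1 ≤ ‖iteratedDeriv 2 f 0 / 2‖ - 1 ∧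
      ‖iteratedDeriv 2 f 0 / 2‖ - 1 ≤ 2 * (1 - α) * Real.cos γ - 1 := by
  have h01 : (0 : ℂ) ∈ ball (0 : ℂ) 1 := mem_ball_self one_pos
  have hcos : 0 < Real.cos γ := Real.cos_pos_of_mem_Ioo ⟨hγ₁, hγ₂⟩
  obtain ⟨p, hp⟩ := hf 0 h01
  -- the function u = f z / z
  set u : ℂ → ℂ := dslope f 0 with hu_def
  have hu_at0 : HasFPowerSeriesAt u p.fslope 0 := hp.has_fpower_series_dslope_fslope
  have hu0 : u 0 = 1 := by rw [hu_def, dslope_same, hf1]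
  have hu_eq : ∀ z : ℂ, z ≠ 0 → u z = f z / z := by
    intro z hz
    rw [hu_def, dslope_of_ne f hz, slope_def_field, hf0, sub_zero, sub_zero]
  have hu : AnalyticOnNhd ℂ u (ball 0 1) := by
    intro z hz
    rcases eq_or_ne z 0 with rfl | hz0
    · exact hu_at0.analyticAt
    · refine (((hf z hz).div analyticAt_id hz0)).congr ?_
      filter_upwards [eventually_ne_nhds hz0] with w hw
      exact (hu_eq w hw).symm
  have hune : ∀ z ∈ ball (0 : ℂ) 1, u z ≠ 0 := by
    intro z hz
    rcases eq_or_ne z 0 with rfl | hz0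
    · rw [hu0]; exact one_ne_zero
    · rw [hu_eq z hz0]; exact div_ne_zero (hfz z hz hz0) hz0
  set c : ℂ := p.coeff 2 with hc_def
  -- derivative of u at 0 is c
  have hdu : HasDerivAt u c 0 := by
    have h := hu_at0.hasDerivAt
    have h1 : (p.fslope 1 fun _ => 1) = c := by
      rw [hc_def, ← p.coeff_fslope]; rfl
    rwa [h1] at h
  -- iteratedDeriv 2 f 0 = 2 * c
  have hit : iteratedDeriv 2 f 0 = 2 * c := by
    obtain ⟨r, hr⟩ := hp
    have h2 := hr.factorial_smul (y := (1 : ℂ)) 2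
    rw [iteratedDeriv_eq_iteratedFDeriv, ← h2]
    simp [Nat.factorial]
    rfl
  -- second derivative of f
  have hdf2 : HasDerivAt (deriv f) (2 * c) 0 := by
    have h := ((hf.deriv 0 h01).differentiableAt).hasDerivAt
    have h2 : deriv (deriv f) 0 = 2 * c := by
      rw [← hit, iteratedDeriv_succ, iteratedDeriv_one]
    rwa [h2] at h
  -- g = z f'(z) / f(z), extended analytically
  set g : ℂ → ℂ := fun z => deriv f z / u z with hg_def
  have hg : AnalyticOnNhd ℂ g (ball 0 1) := fun z hz =>
    ((hf.deriv z hz).div (hu z hz) (hune z hz))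
  have hg0 : g 0 = 1 := by rw [hg_def]; simp [hu0, hf1]
  have hg_eq : ∀ z ∈ ball (0 : ℂ) 1, z ≠ 0 → g z = z * deriv f z / f z := by
    intro z hz hz0
    rw [hg_def]
    simp only
    rw [hu_eq z hz0]
    field_simp
  have hdg : HasDerivAt g c 0 := by
    have h := hdf2.div hdu (by rw [hu0]; exact one_ne_zero)
    rw [hu0, hf1] at h
    refine h.congr_deriv ?_
    ring
  -- the positive-real-part function P
  set E : ℂ := Complex.exp (-(↑γ * Complex.I)) with hE_def
  have hEre : E.re = Real.cos γ := by
    rw [hE_def, show -(↑γ * Complex.I) = ((-γ : ℝ) : ℂ) * Complex.I by push_cast; ring,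
      Complex.exp_ofReal_mul_I_re, Real.cos_neg]
  have hEabs : ‖E‖ = 1 := by
    rw [hE_def, Complex.norm_exp]
    simp
  set P : ℂ → ℂ := fun z => E * g z - ((α * Real.cos γ : ℝ) : ℂ) with hP_def
  have hPre : ∀ z ∈ ball (0 : ℂ) 1, 0 < (P z).re := by
    intro z hz
    rcases eq_or_ne z 0 with rfl | hz0
    · rw [hP_def]
      simp only [hg0, mul_one, Complex.sub_re, Complex.ofReal_re, hEre]
      nlinarith
    · have h := hre z hz hz0
      rw [hP_def]
      simp only [Complex.sub_re, Complex.ofReal_re]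
      rw [hg_eq z hz hz0]
      linarith
  have hPdiff : DifferentiableOn ℂ P (ball 0 1) := fun z hz =>
    (((hg z hz).differentiableAt.const_mul E).sub_const _).differentiableWithinAt
  set Q : ℂ := P 0 with hQ_def
  have hQre : Q.re = (1 - α) * Real.cos γ := by
    rw [hQ_def, hP_def]
    simp only [hg0, mul_one, Complex.sub_re, Complex.ofReal_re, hEre]
    ring
  have hQpos : 0 < Q.re := hPre 0 h01
  set D : ℂ := E * c with hD_def
  have hPd : HasDerivAt P D 0 := (hdg.const_mul E).sub_const _
  -- the Möbius-composed map φ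
  have hden : ∀ z ∈ ball (0 : ℂ) 1, P z + (starRingEnd ℂ) Q ≠ 0 := by
    intro z hz h
    have h2 := congrArg Complex.re h
    simp only [Complex.add_re, Complex.conj_re, Complex.zero_re] at h2
    have h3 := hPre z hz
    linarith
  set φ : ℂ → ℂ := fun z => (P z - Q) / (P z + (starRingEnd ℂ) Q) with hφ_def
  have hφ0 : φ 0 = 0 := by rw [hφ_def]; simp; exact Or.inl (sub_self _)
  have hφdiff : DifferentiableOn ℂ φ (ball 0 1) :=
    (hPdiff.sub (differentiableOn_const Q)).div
      (hPdiff.add (differentiableOn_const _)) hden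
  have hmaps : Set.MapsTo φ (ball 0 1) (ball (φ 0) 1) := by
    intro z hz
    rw [hφ0, mem_ball_zero_iff]
    have hA := hPre z hz
    have hkey : Complex.normSq (P z + (starRingEnd ℂ) Q) - Complex.normSq (P z - Q)
        = 4 * (P z).re * Q.re := by
      simp only [Complex.normSq_apply, Complex.add_re, Complex.add_im, Complex.sub_re,
        Complex.sub_im, Complex.conj_re, Complex.conj_im]
      ring
    have habs : ‖P z - Q‖ < ‖P z + (starRingEnd ℂ) Q‖ := by
      apply lt_of_pow_lt_pow_left₀ 2 (norm_nonneg _)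
      rw [Complex.sq_norm, Complex.sq_norm]
      nlinarith
    rw [hφ_def]
    simp only [norm_div]
    rw [div_lt_one (norm_pos_iff.mpr (hden z hz))]
    exact habs
  -- Schwarz lemma
  have hs := Complex.norm_deriv_le_div_of_mapsTo_ball hφdiff (hmaps.mono_right ball_subset_closedBall) one_pos
  have hφd : HasDerivAt φ (D / (2 * ((Q.re : ℝ) : ℂ))) 0 := by
    have hNum : HasDerivAt (fun z => P z - Q) D 0 := hPd.sub_const Q
    have hDen : HasDerivAt (fun z => P z + (starRingEnd ℂ) Q) D 0 := hPd.add_const _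
    have h := hNum.div hDen (hden 0 h01)
    refine h.congr_deriv ?_
    rw [← hQ_def, Complex.add_conj]
    have hS : (2 * ((Q.re : ℝ) : ℂ)) ≠ 0 := by
      simp only [ne_eq, mul_eq_zero, OfNat.ofNat_ne_zero, false_or, Complex.ofReal_eq_zero]
      exact hQpos.ne'
    have hq : ((Q.re : ℝ) : ℂ) ≠ 0 := by exact_mod_cast hQpos.ne'
    field_simp
    push_cast
    field_simp
    ring
  rw [hφd.deriv] at hs
  have hDle : ‖D‖ ≤ 2 * Q.re := by
    rw [norm_div] at hs
    have h2 : ‖(2 * ((Q.re : ℝ) : ℂ))‖ = 2 * Q.re := by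
      rw [show (2 * ((Q.re : ℝ) : ℂ)) = (((2 * Q.re : ℝ)) : ℂ) by push_cast; ring,
        Complex.norm_real, Real.norm_eq_abs, abs_of_pos (by linarith)]
    rw [h2, div_le_iff₀ (by linarith), one_div] at hs
    calc ‖D‖ ≤ 1⁻¹ * (2 * Q.re) := hs
    _ = 2 * Q.re := by ring
  have hDabs : ‖D‖ = ‖c‖ := by
    rw [hD_def, norm_mul, hEabs, one_mul]
  have hfinal : ‖iteratedDeriv 2 f 0 / 2‖ = ‖c‖ := by
    rw [hit]
    congr 1
    ring
  constructor
  · rw [hfinal]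
    have := norm_nonneg c
    linarith
  · rw [hfinal]
    rw [hDabs] at hDle
    rw [hQre] at hDle
    linarith
end

section
/- Let -π/2 < γ < π/2 and set T(0,γ) = √(1 + 8cos²γ). For every γ-spirallike function f ∈ S_γ(0) with Taylor expansion f(z) = z + a₂z² + a₃z³ + ⋯, one has -2cos γ / √(1 + T(0,γ)) ≤ |a₃| - |a₂| ≤ cos γ. -/
open Complex Metric Real Filter

namespace Stmt3Aux

lemma ev_diff {u : ℂ → ℂ} {x : ℂ} (hu : AnalyticAt ℂ u x) :
    ∀ᶠ z in nhds x, DifferentiableAt ℂ u z :=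
  hu.eventually_analyticAt.mono fun _ h => h.differentiableAt

lemma an_deriv {u : ℂ → ℂ} {x : ℂ} (hu : AnalyticAt ℂ u x) : AnalyticAt ℂ (deriv u) x :=
  (AnalyticOnNhd.deriv (fun _ hy => hy : AnalyticOnNhd ℂ u {y | AnalyticAt ℂ u y})) x hu

lemma ev_deriv_mul {u v : ℂ → ℂ} {x : ℂ} (hu : AnalyticAt ℂ u x) (hv : AnalyticAt ℂ v x) :
    deriv (fun z => u z * v z) =ᶠ[nhds x] fun z => deriv u z * v z + u z * deriv v z := by
  filter_upwards [ev_diff hu, ev_diff hv] with z h1 h2 using deriv_mul h1 h2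

lemma ev_deriv_add {u v : ℂ → ℂ} {x : ℂ} (hu : AnalyticAt ℂ u x) (hv : AnalyticAt ℂ v x) :
    deriv (fun z => u z + v z) =ᶠ[nhds x] fun z => deriv u z + deriv v z := by
  filter_upwards [ev_diff hu, ev_diff hv] with z h1 h2 using deriv_add h1 h2

lemma ev_deriv_const_mul (c : ℂ) {u : ℂ → ℂ} {x : ℂ} (hu : AnalyticAt ℂ u x) :
    deriv (fun z => c * u z) =ᶠ[nhds x] fun z => c * deriv u z := by
  filter_upwards [ev_diff hu] with z h1 using deriv_const_mul c h1

lemma ev_deriv_const_add (c : ℂ) {u : ℂ → ℂ} {x : ℂ} :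
    deriv (fun z => c + u z) =ᶠ[nhds x] fun z => deriv u z := by
  filter_upwards [] with z using by rw [deriv_const_add]

lemma ev_deriv_id_mul {u : ℂ → ℂ} {x : ℂ} (hu : AnalyticAt ℂ u x) :
    deriv (fun z => z * u z) =ᶠ[nhds x] fun z => u z + z * deriv u z := by
  have h := ev_deriv_mul analyticAt_id hu
  filter_upwards [h] with z hz
  simpa [id_eq, deriv_id'] using hz

/-- dslope of an analytic function is analytic on an open set containing the base point. -/
lemma analyticOnNhd_dslope {u : ℂ → ℂ} {s : Set ℂ} (h0 : (0:ℂ) ∈ s)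
    (hu : AnalyticOnNhd ℂ u s) : AnalyticOnNhd ℂ (dslope u 0) s := by
  intro z hz
  rcases eq_or_ne z 0 with rfl | hzne
  · obtain ⟨ps, hps⟩ := hu 0 h0
    exact ⟨_, hps.has_fpower_series_dslope_fslope⟩
  · have h1 : AnalyticAt ℂ (fun w => (u w - u 0) / (w - 0)) z :=
      ((hu z hz).sub analyticAt_const).div (analyticAt_id.sub analyticAt_const)
        (by simpa using hzne)
    refine h1.congr ?_
    filter_upwards [dslope_eventuallyEq_slope_of_ne u hzne] with w hw
    rw [hw, slope_def_field]

/-- Möbius inequality: if `|a| < 1` and `|b| < 1` then `|(b-a)/(1 - conj a * b)| < 1`. -/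
lemma mobius_lt_one {a b : ℂ} (ha : ‖a‖ < 1) (hb : ‖b‖ < 1) :
    ‖(b - a) / (1 - (starRingEnd ℂ) a * b)‖ < 1 := by
  have hden : ‖1 - (starRingEnd ℂ) a * b‖ ≠ 0 := by
    intro h
    have h1 : (1 : ℂ) - (starRingEnd ℂ) a * b = 0 := by
      simpa using (norm_eq_zero.mp h)
    have h2 : ‖(starRingEnd ℂ) a * b‖ = 1 := by
      have : (starRingEnd ℂ) a * b = 1 := by linear_combination -h1
      simp [this]
    rw [norm_mul, Complex.norm_conj] at h2
    nlinarith [norm_nonneg a, norm_nonneg b]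
  have hdenpos : 0 < ‖1 - (starRingEnd ℂ) a * b‖ :=
    lt_of_le_of_ne (norm_nonneg _) (Ne.symm hden)
  rw [norm_div, div_lt_one hdenpos]
  have hsq : ‖b - a‖ ^ 2 < ‖1 - (starRingEnd ℂ) a * b‖ ^ 2 := by
    rw [Complex.sq_norm, Complex.sq_norm]
    have hna : Complex.normSq a < 1 := by rw [← Complex.sq_norm]; nlinarith [norm_nonneg a]
    have hnb : Complex.normSq b < 1 := by rw [← Complex.sq_norm]; nlinarith [norm_nonneg b]
    have key : Complex.normSq (1 - (starRingEnd ℂ) a * b) - Complex.normSq (b - a)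
        = (1 - Complex.normSq a) * (1 - Complex.normSq b) := by
      simp only [Complex.normSq_apply, Complex.sub_re, Complex.sub_im, Complex.mul_re,
        Complex.mul_im, Complex.one_re, Complex.one_im, Complex.conj_re, Complex.conj_im]
      ring
    nlinarith [key, hna, hnb]
  nlinarith [norm_nonneg (b - a), hdenpos]

/-- Schwarz–Pick at the origin for self-maps of the disk (with ≤ 1 bound). -/
lemma schwarz_pick_zero {φ : ℂ → ℂ} (hφ : AnalyticOnNhd ℂ φ (ball 0 1))
    (hb : ∀ z ∈ ball (0:ℂ) 1, ‖φ z‖ ≤ 1) :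
    ‖deriv φ 0‖ ≤ 1 - ‖φ 0‖ ^ 2 := by
  have h0 : (0:ℂ) ∈ ball (0:ℂ) 1 := by simp
  by_cases hc : ∃ z ∈ ball (0:ℂ) 1, 1 ≤ ‖φ z‖
  · obtain ⟨z₀, hz₀, hz₀1⟩ := hc
    have hmax : IsMaxOn (norm ∘ φ) (ball (0:ℂ) 1) z₀ := by
      intro w hw
      simp only [Function.comp_apply, Set.mem_setOf_eq]
      exact le_trans (hb w hw) hz₀1
    have heq : Set.EqOn φ (Function.const ℂ (φ z₀)) (ball (0:ℂ) 1) :=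
      Complex.eqOn_of_isPreconnected_of_isMaxOn_norm (convex_ball _ _).isPreconnected
        isOpen_ball hφ.differentiableOn hz₀ hmax
    have hev : φ =ᶠ[nhds 0] Function.const ℂ (φ z₀) :=
      eventuallyEq_of_mem (isOpen_ball.mem_nhds h0) heq
    have hd0 : deriv φ 0 = 0 := by
      rw [hev.deriv_eq]; exact deriv_const 0 (φ z₀)
    have hφ0 : ‖φ 0‖ = 1 :=
      le_antisymm (hb 0 h0) (by rw [heq h0]; exact hz₀1)
    rw [hd0, hφ0]; simp
  · push_neg at hc
    set a := φ 0 with ha_def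
    have ha : ‖a‖ < 1 := hc 0 h0
    have hden : ∀ z ∈ ball (0:ℂ) 1, (1 : ℂ) - (starRingEnd ℂ) a * φ z ≠ 0 := by
      intro z hz h
      have : ‖(starRingEnd ℂ) a * φ z‖ = 1 := by
        have h1 : (starRingEnd ℂ) a * φ z = 1 := by linear_combination -h
        simp [h1]
      rw [norm_mul, Complex.norm_conj] at this
      nlinarith [hb z hz, norm_nonneg a, norm_nonneg (φ z)]
    set g : ℂ → ℂ := fun z => (φ z - a) / (1 - (starRingEnd ℂ) a * φ z) with hg_def
    have hga : AnalyticOnNhd ℂ g (ball 0 1) :=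
      (hφ.sub analyticOnNhd_const).div
        (analyticOnNhd_const.sub (analyticOnNhd_const.mul hφ)) hden
    have hg0 : g 0 = 0 := by simp [hg_def, ← ha_def]
    have hmaps : Set.MapsTo g (ball (0:ℂ) 1) (ball (g 0) 1) := by
      intro z hz
      rw [hg0, mem_ball_zero_iff]
      exact mobius_lt_one ha (hc z hz)
    have hsch : ‖deriv g 0‖ ≤ 1 / 1 :=
      Complex.norm_deriv_le_div_of_mapsTo_ball hga.differentiableOn (hmaps.mono_right ball_subset_closedBall) one_pos
    have hD0 : (1 : ℂ) - (starRingEnd ℂ) a * a = 1 - (Complex.normSq a : ℂ) := by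
      rw [Complex.normSq_eq_conj_mul_self]
    have hD0ne : (1 : ℂ) - (starRingEnd ℂ) a * φ 0 ≠ 0 := hden 0 h0
    have hdg : deriv g 0 = deriv φ 0 / (1 - (starRingEnd ℂ) a * a) := by
      have hN : DifferentiableAt ℂ (fun z => φ z - a) 0 :=
        ((hφ 0 h0).differentiableAt).sub_const a
      have hD : DifferentiableAt ℂ (fun z => 1 - (starRingEnd ℂ) a * φ z) 0 :=
        (differentiableAt_const _).sub ((differentiableAt_const _).mul (hφ 0 h0).differentiableAt)
      have := deriv_fun_div hN hD (by simpa [← ha_def] using hD0ne)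
      rw [hg_def]
      rw [this]
      have h1 : deriv (fun z => φ z - a) 0 = deriv φ 0 := by
        simp [deriv_sub_const]
      have h2 : deriv (fun z => 1 - (starRingEnd ℂ) a * φ z) 0
          = -((starRingEnd ℂ) a * deriv φ 0) := by
        rw [deriv_const_sub]
        rw [deriv_const_mul _ (hφ 0 h0).differentiableAt]
      rw [h1, h2, ← ha_def]
      have hne : (1 : ℂ) - (starRingEnd ℂ) a * a ≠ 0 := by simpa [← ha_def] using hD0ne
      field_simp
      ring
    have habsD : ‖(1:ℂ) - (starRingEnd ℂ) a * a‖ = 1 - ‖a‖ ^ 2 := by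
      rw [hD0]
      have h1 : Complex.normSq a ≤ 1 := by rw [← Complex.sq_norm]; nlinarith [norm_nonneg a]
      rw [show (1 : ℂ) - (Complex.normSq a : ℂ) = ((1 - Complex.normSq a : ℝ) : ℂ) by
        push_cast; ring]
      rw [Complex.norm_real, Real.norm_eq_abs, _root_.abs_of_nonneg (by linarith), Complex.sq_norm]
    have := hsch
    rw [hdg, norm_div, habsD] at this
    have hpos : 0 < 1 - ‖a‖ ^ 2 := by nlinarith [norm_nonneg a]
    rw [div_le_div_iff₀ hpos one_pos] at this
    linarith

lemma endgame (cγ T t s A : ℝ) (hc : 0 < cγ) (hc1 : cγ ≤ 1)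
    (hT' : T = Real.sqrt (1 + 8 * cγ ^ 2))
    (ht : 0 ≤ t) (ht1 : t ≤ 1) (hs : 0 ≤ s) (hs1 : s ≤ 1 - t ^ 2) (hA0 : 0 ≤ A)
    (hAub : A ≤ s + T * t ^ 2) (hAlb : T * t ^ 2 - s ≤ A) :
    -(2 * cγ) / Real.sqrt (1 + T) ≤ cγ * A - 2 * cγ * t ∧
      cγ * A - 2 * cγ * t ≤ cγ := by
  have hT2 : T ^ 2 = 1 + 8 * cγ ^ 2 := by
    rw [hT']; rw [sq_sqrt]; nlinarith
  have hT0 : 0 ≤ T := by rw [hT']; positivity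
  have hT1 : 1 ≤ T := by nlinarith
  have hT3 : T ≤ 3 := by nlinarith
  set v := Real.sqrt (1 + T) with hv
  have hv2 : v ^ 2 = 1 + T := by rw [hv, sq_sqrt]; linarith
  have hv0 : 0 < v := by rw [hv]; positivity
  have hv1 : 1 ≤ v := by nlinarith
  constructor
  · rw [neg_div, neg_le]
    rw [le_div_iff₀ hv0]
    rcases le_or_gt (t * v) 1 with h | h
    · nlinarith [mul_nonneg (mul_nonneg hc.le hA0) hv0.le,
        mul_le_mul_of_nonneg_left h (by positivity : (0:ℝ) ≤ 2 * cγ)]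
    · have hAlb' : v ^ 2 * t ^ 2 - 1 ≤ A := by nlinarith
      have key : 0 ≤ (t * v - 1) * (v * (t * v) + v - 2) := by
        apply mul_nonneg (by linarith)
        nlinarith
      nlinarith [key, mul_le_mul_of_nonneg_left hAlb' (mul_nonneg hc.le hv0.le)]
  · nlinarith [mul_le_mul_of_nonneg_left hAub hc.le,
      mul_le_mul_of_nonneg_left hs1 hc.le,
      mul_nonneg (mul_nonneg hc.le (sub_nonneg.2 hT3)) (mul_nonneg ht ht),
      mul_nonneg hc.le (mul_nonneg ht (sub_nonneg.2 ht1))]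

end Stmt3Aux

open Stmt3Aux

set_option maxHeartbeats 1600000 in
/-- For `-π/2 < γ < π/2`, `T(0,γ) = √(1 + 8cos²γ)` and `f ∈ S_γ(0)`
(γ-spirallike), one has `-2cos γ / √(1 + T(0,γ)) ≤ |a₃| - |a₂| ≤ cos γ`, where
`a₂ = iteratedDeriv 2 f 0 / 2` and `a₃ = iteratedDeriv 3 f 0 / 6`. -/
theorem stmt_3 (γ : ℝ) (hγ₁ : -(π / 2) < γ) (hγ₂ : γ < π / 2)
    (f : ℂ → ℂ) (hf : AnalyticOnNhd ℂ f (ball 0 1))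
    (hf0 : f 0 = 0) (hf1 : deriv f 0 = 1)
    (hfz : ∀ z ∈ ball (0 : ℂ) 1, z ≠ 0 → f z ≠ 0)
    (hre : ∀ z ∈ ball (0 : ℂ) 1, z ≠ 0 →
      0 < (Complex.exp (-(↑γ * Complex.I)) * (z * deriv f z / f z)).re)
    (T : ℝ) (hT : T = Real.sqrt (1 + 8 * Real.cos γ ^ 2)) :
    -(2 * Real.cos γ) / Real.sqrt (1 + T) ≤
        ‖iteratedDeriv 3 f 0 / 6‖ - ‖iteratedDeriv 2 f 0 / 2‖ ∧
      ‖iteratedDeriv 3 f 0 / 6‖ - ‖iteratedDeriv 2 f 0 / 2‖ ≤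
        Real.cos γ := by
  have h0B : (0:ℂ) ∈ ball (0:ℂ) 1 := by simp
  have hBmem : ball (0:ℂ) 1 ∈ nhds (0:ℂ) := isOpen_ball.mem_nhds h0B
  have hcos : 0 < Real.cos γ := Real.cos_pos_of_mem_Ioo ⟨hγ₁, hγ₂⟩
  have hcos1 : Real.cos γ ≤ 1 := Real.cos_le_one γ
  set c0 : ℂ := Complex.exp (-(↑γ * Complex.I)) with hc0_def
  set E1 : ℂ := Complex.exp (↑γ * Complex.I) with hE1_def
  have hc0E1 : E1 * c0 = 1 := by
    rw [hc0_def, hE1_def, ← Complex.exp_add]; simp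
  have hE1eq : E1 = (Real.cos γ : ℂ) + (Real.sin γ : ℂ) * Complex.I := by
    rw [hE1_def, Complex.exp_mul_I, Complex.ofReal_cos, Complex.ofReal_sin]
  have hc0eq : c0 = (Real.cos γ : ℂ) - (Real.sin γ : ℂ) * Complex.I := by
    rw [hc0_def, show -(↑γ * Complex.I) = (-(γ:ℂ)) * Complex.I by ring,
      Complex.exp_mul_I, Complex.cos_neg, Complex.sin_neg, ← Complex.ofReal_cos,
      ← Complex.ofReal_sin]
    ring
  have hE1re : E1.re = Real.cos γ := by rw [hE1eq]; simp [Complex.cos_ofReal_re, Complex.sin_ofReal_im, Complex.cos_ofReal_im, Complex.sin_ofReal_re]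
  have hE1im : E1.im = Real.sin γ := by rw [hE1eq]; simp [Complex.cos_ofReal_re, Complex.sin_ofReal_im, Complex.cos_ofReal_im, Complex.sin_ofReal_re]
  have hc0re : c0.re = Real.cos γ := by rw [hc0eq]; simp [Complex.cos_ofReal_re, Complex.sin_ofReal_im, Complex.cos_ofReal_im, Complex.sin_ofReal_re]
  have hc0im : c0.im = -Real.sin γ := by rw [hc0eq]; simp [Complex.cos_ofReal_re, Complex.sin_ofReal_im, Complex.cos_ofReal_im, Complex.sin_ofReal_re]
  have habsE1 : ‖E1‖ = 1 := by
    rw [hE1_def, Complex.norm_exp]; simp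
  set Kc : ℂ := ((2 * Real.cos γ : ℝ) : ℂ) with hKc_def
  have hKc : Kc = c0 + E1 := by
    rw [hKc_def, hc0eq, hE1eq]; push_cast; ring
  -- the function q = f(z)/z
  set q : ℂ → ℂ := dslope f 0 with hq_def
  have hq0 : q 0 = 1 := by rw [hq_def, dslope_same]; exact hf1
  have hqa : AnalyticOnNhd ℂ q (ball 0 1) := analyticOnNhd_dslope h0B hf
  have hfzq : ∀ z ∈ ball (0:ℂ) 1, f z = z * q z := by
    intro z hz
    rcases eq_or_ne z 0 with rfl | hzne
    · simp [hf0]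
    · rw [hq_def, dslope_of_ne f hzne, slope_def_field, hf0]
      field_simp
      ring
  have hqne : ∀ z ∈ ball (0:ℂ) 1, q z ≠ 0 := by
    intro z hz
    rcases eq_or_ne z 0 with rfl | hzne
    · rw [hq0]; exact one_ne_zero
    · intro h
      exact hfz z hz hzne (by rw [hfzq z hz, h, mul_zero])
  -- the function p with positive real part
  set p : ℂ → ℂ := fun z => c0 * (deriv f z / q z) with hp_def
  have hpa : AnalyticOnNhd ℂ p (ball 0 1) :=
    analyticOnNhd_const.mul ((hf.deriv).div hqa hqne)
  have hp0 : p 0 = c0 := by rw [hp_def]; simp [hf1, hq0]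
  have hf'eq : ∀ z ∈ ball (0:ℂ) 1, deriv f z = E1 * (p z * q z) := by
    intro z hz
    have hq := hqne z hz
    have h1 : p z * q z = c0 * deriv f z := by
      rw [hp_def]; field_simp
    rw [h1, ← mul_assoc, hc0E1, one_mul]
  have hpre : ∀ z ∈ ball (0:ℂ) 1, 0 < (p z).re := by
    intro z hz
    rcases eq_or_ne z 0 with rfl | hzne
    · rw [hp0, hc0re]; exact hcos
    · have h := hre z hz hzne
      have heq : Complex.exp (-(↑γ * Complex.I)) * (z * deriv f z / f z) = p z := by
        rw [hfzq z hz, mul_div_mul_left _ _ hzne, hp_def]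
      rwa [heq] at h
  have hdenom : ∀ z ∈ ball (0:ℂ) 1, p z + E1 ≠ 0 := by
    intro z hz h
    have h1 := congrArg Complex.re h
    simp only [Complex.add_re, Complex.zero_re, hE1re] at h1
    nlinarith [hpre z hz]
  -- the function ω
  set ω : ℂ → ℂ := fun z => (p z - c0) / (p z + E1) with hω_def
  have hωa : AnalyticOnNhd ℂ ω (ball 0 1) :=
    (hpa.sub analyticOnNhd_const).div (hpa.add analyticOnNhd_const) hdenom
  have hω0 : ω 0 = 0 := by rw [hω_def]; simp [hp0]
  have hωlt : ∀ z ∈ ball (0:ℂ) 1, ‖ω z‖ < 1 := by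
    intro z hz
    rw [hω_def]
    have hsq : Complex.normSq (p z - c0) < Complex.normSq (p z + E1) := by
      simp only [Complex.normSq_apply, Complex.sub_re, Complex.sub_im, Complex.add_re,
        Complex.add_im, hc0re, hc0im, hE1re, hE1im]
      nlinarith [hpre z hz, hcos]
    have h1 : ‖p z - c0‖ < ‖p z + E1‖ := by
      have e1 := Complex.sq_norm (p z - c0)
      have e2 := Complex.sq_norm (p z + E1)
      nlinarith [norm_nonneg (p z - c0), norm_nonneg (p z + E1)]
    have hpos : 0 < ‖p z + E1‖ := lt_of_le_of_lt (norm_nonneg _) h1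
    rw [norm_div, div_lt_one hpos]
    exact h1
  -- the function φ
  set φ : ℂ → ℂ := dslope ω 0 with hφ_def
  have hφa : AnalyticOnNhd ℂ φ (ball 0 1) := analyticOnNhd_dslope h0B hωa
  have hφle : ∀ z ∈ ball (0:ℂ) 1, ‖φ z‖ ≤ 1 := by
    intro z hz
    have hmaps : Set.MapsTo ω (ball (0:ℂ) 1) (ball (ω 0) 1) := by
      rw [hω0]
      intro w hw
      rw [mem_ball_zero_iff]
      exact hωlt w hw
    have := Complex.norm_dslope_le_div_of_mapsTo_ball hωa.differentiableOn (hmaps.mono_right ball_subset_closedBall) hz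
    rw [hφ_def]
    simpa using this
  have hωzφ : ∀ z ∈ ball (0:ℂ) 1, ω z = z * φ z := by
    intro z hz
    rcases eq_or_ne z 0 with rfl | hzne
    · simp [hω0]
    · rw [hφ_def, dslope_of_ne ω hzne, slope_def_field, hω0]
      field_simp
      ring
  have SP : ‖deriv φ 0‖ ≤ 1 - ‖φ 0‖ ^ 2 :=
    schwarz_pick_zero hφa hφle
  -- eventual equalities
  have hEf : f =ᶠ[nhds (0:ℂ)] fun z => z * q z := eventuallyEq_of_mem hBmem hfzq
  have hEdf : deriv f =ᶠ[nhds (0:ℂ)] fun z => E1 * (p z * q z) :=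
    eventuallyEq_of_mem hBmem hf'eq
  have hEp : p =ᶠ[nhds (0:ℂ)] fun z => c0 + (E1 * ω z + p z * ω z) := by
    apply eventuallyEq_of_mem hBmem
    intro z hz
    have hd := hdenom z hz
    rw [hω_def]
    field_simp
    ring
  have hEω : ω =ᶠ[nhds (0:ℂ)] fun z => z * φ z := eventuallyEq_of_mem hBmem hωzφ
  -- analyticity at 0
  have hqa0 : AnalyticAt ℂ q 0 := hqa 0 h0B
  have hpa0 : AnalyticAt ℂ p 0 := hpa 0 h0B
  have hωa0 : AnalyticAt ℂ ω 0 := hωa 0 h0B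
  have hφa0 : AnalyticAt ℂ φ 0 := hφa 0 h0B
  have hdq : DifferentiableAt ℂ (deriv q) 0 := (an_deriv hqa0).differentiableAt
  have hddq : DifferentiableAt ℂ (deriv (deriv q)) 0 := (an_deriv (an_deriv hqa0)).differentiableAt
  have hdp : DifferentiableAt ℂ (deriv p) 0 := (an_deriv hpa0).differentiableAt
  have hdω : DifferentiableAt ℂ (deriv ω) 0 := (an_deriv hωa0).differentiableAt
  have hdφ : DifferentiableAt ℂ (deriv φ) 0 := (an_deriv hφa0).differentiableAt
  -- derivative computations
  have hi2 : iteratedDeriv 2 f 0 = deriv (deriv f) 0 := by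
    rw [show (2:ℕ) = 1 + 1 from rfl, iteratedDeriv_succ, iteratedDeriv_one]
  have hi3 : iteratedDeriv 3 f 0 = deriv (deriv (deriv f)) 0 := by
    rw [show (3:ℕ) = 1 + 1 + 1 from rfl, iteratedDeriv_succ, iteratedDeriv_succ,
      iteratedDeriv_one]
  have hd1 : deriv f =ᶠ[nhds (0:ℂ)] fun z => q z + z * deriv q z :=
    hEf.deriv.trans (ev_deriv_id_mul hqa0)
  have I2 : deriv (deriv f) 0 = 2 * deriv q 0 := by
    rw [hd1.deriv_eq, deriv_fun_add hqa0.differentiableAt (differentiableAt_fun_id.fun_mul hdq),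
      deriv_fun_mul differentiableAt_fun_id hdq]
    simp
    ring
  have hd2 : deriv (deriv f) =ᶠ[nhds (0:ℂ)]
      fun z => 2 * deriv q z + z * deriv (deriv q) z := by
    have h1 := hd1.deriv
    have hzdq : AnalyticAt ℂ (fun z : ℂ => z * deriv q z) 0 := by
      exact analyticAt_id.mul (an_deriv hqa0)
    have h2 := ev_deriv_add hqa0 hzdq
    have h3 := ev_deriv_id_mul (an_deriv hqa0)
    filter_upwards [h1, h2, h3] with z e1 e2 e3
    rw [e1, e2, e3]
    ring
  have I3 : deriv (deriv (deriv f)) 0 = 3 * deriv (deriv q) 0 := by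
    rw [hd2.deriv_eq, deriv_fun_add (hdq.const_mul 2) (differentiableAt_fun_id.fun_mul hddq),
      deriv_const_mul 2 hdq, deriv_fun_mul differentiableAt_fun_id hddq]
    simp
    ring
  have I2' : deriv (deriv f) 0 = E1 * (deriv p 0 * q 0 + p 0 * deriv q 0) := by
    rw [hEdf.deriv_eq, deriv_const_mul _ (hpa0.differentiableAt.fun_mul hqa0.differentiableAt),
      deriv_fun_mul hpa0.differentiableAt hqa0.differentiableAt]
  have hd1' : deriv (deriv f) =ᶠ[nhds (0:ℂ)]
      fun z => E1 * (deriv p z * q z + p z * deriv q z) := by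
    have h1 := hEdf.deriv
    have h2 := ev_deriv_const_mul E1 (hpa0.fun_mul hqa0)
    have h3 := ev_deriv_mul hpa0 hqa0
    filter_upwards [h1, h2, h3] with z e1 e2 e3
    rw [e1, e2, e3]
  have I3' : deriv (deriv (deriv f)) 0 =
      E1 * ((deriv (deriv p) 0 * q 0 + deriv p 0 * deriv q 0)
        + (deriv p 0 * deriv q 0 + p 0 * deriv (deriv q) 0)) := by
    rw [hd1'.deriv_eq]
    rw [deriv_const_mul _ ((hdp.fun_mul hqa0.differentiableAt).fun_add
      (hpa0.differentiableAt.fun_mul hdq))]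
    rw [deriv_fun_add (hdp.fun_mul hqa0.differentiableAt) (hpa0.differentiableAt.fun_mul hdq)]
    rw [deriv_fun_mul hdp hqa0.differentiableAt, deriv_fun_mul hpa0.differentiableAt hdq]
  -- ω and φ derivatives
  have Dω0 : deriv ω 0 = φ 0 := by
    rw [hEω.deriv_eq, deriv_fun_mul differentiableAt_fun_id hφa0.differentiableAt]
    simp
  have hdω1 : deriv ω =ᶠ[nhds (0:ℂ)] fun z => φ z + z * deriv φ z :=
    hEω.deriv.trans (ev_deriv_id_mul hφa0)
  have DDω0 : deriv (deriv ω) 0 = 2 * deriv φ 0 := by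
    rw [hdω1.deriv_eq, deriv_fun_add hφa0.differentiableAt (differentiableAt_fun_id.fun_mul hdφ),
      deriv_fun_mul differentiableAt_fun_id hdφ]
    simp
    ring
  have J1 : deriv p 0 = (c0 + E1) * φ 0 := by
    have h := hEp.deriv_eq
    rw [deriv_const_add] at h
    rw [h, deriv_fun_add ((hωa0.differentiableAt).const_mul E1)
      (hpa0.differentiableAt.fun_mul hωa0.differentiableAt),
      deriv_const_mul _ hωa0.differentiableAt,
      deriv_fun_mul hpa0.differentiableAt hωa0.differentiableAt, hω0, hp0, Dω0]
    ring
  have hdp1 : deriv p =ᶠ[nhds (0:ℂ)]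
      fun z => E1 * deriv ω z + (deriv p z * ω z + p z * deriv ω z) := by
    have h1 := hEp.deriv
    have h2 := ev_deriv_const_add c0 (u := fun z => E1 * ω z + p z * ω z) (x := (0:ℂ))
    have hE1ω : AnalyticAt ℂ (fun z : ℂ => E1 * ω z) 0 := by
      exact analyticAt_const.mul hωa0
    have hpω : AnalyticAt ℂ (fun z : ℂ => p z * ω z) 0 := by
      exact hpa0.mul hωa0
    have h3 := ev_deriv_add hE1ω hpω
    have h4 := ev_deriv_const_mul E1 hωa0
    have h5 := ev_deriv_mul hpa0 hωa0
    filter_upwards [h1, h2, h3, h4, h5] with z e1 e2 e3 e4 e5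
    rw [e2, e3, e4, e5] at e1
    exact e1
  have J2 : deriv (deriv p) 0 = 2 * (c0 + E1) * deriv φ 0 + 2 * deriv p 0 * φ 0 := by
    rw [hdp1.deriv_eq, deriv_fun_add (hdω.const_mul E1)
      ((hdp.fun_mul hωa0.differentiableAt).fun_add (hpa0.differentiableAt.fun_mul hdω)),
      deriv_const_mul _ hdω,
      deriv_fun_add (hdp.fun_mul hωa0.differentiableAt) (hpa0.differentiableAt.fun_mul hdω),
      deriv_fun_mul hdp hωa0.differentiableAt, deriv_fun_mul hpa0.differentiableAt hdω,
      hω0, hp0, Dω0, DDω0]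
    ring
  -- assemble coefficient identities
  have e2a : iteratedDeriv 2 f 0 = 2 * deriv q 0 := hi2.trans I2
  have e2b : iteratedDeriv 2 f 0 = E1 * (deriv p 0 + c0 * deriv q 0) := by
    rw [hi2, I2', hq0, hp0]; ring
  have e3a : iteratedDeriv 3 f 0 = 3 * deriv (deriv q) 0 := hi3.trans I3
  have e3b : iteratedDeriv 3 f 0 =
      E1 * (deriv (deriv p) 0 + 2 * deriv p 0 * deriv q 0 + c0 * deriv (deriv q) 0) := by
    rw [hi3, I3', hq0, hp0]; ring
  set t0 : ℂ := φ 0 with ht0_def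
  set t1 : ℂ := deriv φ 0 with ht1_def
  have hQ1E : deriv q 0 = E1 * deriv p 0 := by
    linear_combination e2b - e2a + deriv q 0 * hc0E1
  have hQ2E : 2 * deriv (deriv q) 0 = E1 * deriv (deriv p) 0 + 2 * E1 * deriv p 0 * deriv q 0 := by
    linear_combination e3b - e3a + deriv (deriv q) 0 * hc0E1
  have hc1v : deriv p 0 = Kc * t0 := by
    linear_combination J1 - t0 * hKc
  have hP2v : deriv (deriv p) 0 = 2 * Kc * t1 + 2 * Kc * t0 ^ 2 := by
    linear_combination J2 - 2 * t1 * hKc + 2 * t0 * hc1v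
  have hQ1v : deriv q 0 = Kc * E1 * t0 := by
    linear_combination hQ1E + E1 * hc1v
  have hQ2v : deriv (deriv q) 0 =
      Kc * E1 * t1 + Kc * E1 * t0 ^ 2 + Kc ^ 2 * E1 ^ 2 * t0 ^ 2 := by
    linear_combination (1/2) * hQ2E + (E1/2) * hP2v + E1 * deriv q 0 * hc1v
      + Kc * E1 * t0 * hQ1v
  set M : ℂ := 1 + Kc * E1 with hM_def
  have hA2 : iteratedDeriv 2 f 0 / 2 = Kc * E1 * t0 := by
    linear_combination (1/2) * e2a + hQ1v
  have hA3 : iteratedDeriv 3 f 0 / 6 = Kc / 2 * E1 * (t1 + t0 ^ 2 * M) := by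
    rw [hM_def]
    linear_combination (1/6) * e3a + (1/2) * hQ2v
  -- absolute values
  have habsKc : ‖Kc‖ = 2 * Real.cos γ := by
    rw [hKc_def, Complex.norm_real, Real.norm_eq_abs, _root_.abs_of_pos (by linarith)]
  have ha2abs : ‖iteratedDeriv 2 f 0 / 2‖ = 2 * Real.cos γ * ‖t0‖ := by
    rw [hA2, norm_mul, norm_mul, habsKc, habsE1]
    ring
  have habsM : ‖M‖ = T := by
    have h1 : ‖M‖ ^ 2 = 1 + 8 * Real.cos γ ^ 2 := by
      rw [Complex.sq_norm, hM_def]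
      simp only [Complex.normSq_apply, Complex.add_re, Complex.add_im, Complex.one_re,
        Complex.one_im, Complex.mul_re, Complex.mul_im, Complex.ofReal_re, Complex.ofReal_im,
        hE1re, hE1im, hKc_def]
      nlinarith [Real.sin_sq_add_cos_sq γ]
    rw [hT, ← h1, Real.sqrt_sq (norm_nonneg M)]
  have ha3abs : ‖iteratedDeriv 3 f 0 / 6‖
      = Real.cos γ * ‖t1 + t0 ^ 2 * M‖ := by
    rw [hA3, norm_mul, norm_mul, norm_div, habsKc, habsE1, Complex.norm_two]
    ring
  -- real bounds
  set t : ℝ := ‖t0‖ with ht_def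
  set s : ℝ := ‖t1‖ with hs_def
  set A : ℝ := ‖t1 + t0 ^ 2 * M‖ with hA_def
  have habst0M : ‖t0 ^ 2 * M‖ = T * t ^ 2 := by
    rw [norm_mul, norm_pow, habsM, ht_def]; ring
  have hAub : A ≤ s + T * t ^ 2 := by
    rw [hA_def, hs_def, ← habst0M]
    exact norm_add_le _ _
  have hAlb : T * t ^ 2 - s ≤ A := by
    have h1 : ‖t0 ^ 2 * M‖ ≤ A + s := by
      have h2 : t0 ^ 2 * M = (t1 + t0 ^ 2 * M) + (-t1) := by ring
      rw [h2]
      calc ‖(t1 + t0 ^ 2 * M) + (-t1)‖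
          ≤ ‖t1 + t0 ^ 2 * M‖ + ‖-t1‖ := norm_add_le _ _
        _ = A + s := by rw [hA_def, hs_def, norm_neg]
    rw [habst0M] at h1
    linarith
  have hend := endgame (Real.cos γ) T t s A hcos hcos1 hT
    (norm_nonneg t0) (by rw [ht_def]; exact hφle 0 h0B)
    (norm_nonneg t1) (by rw [hs_def, ht_def]; exact SP)
    (norm_nonneg _) hAub hAlb
  rw [ha2abs, ha3abs]
  constructor
  · have := hend.1
    linarith [hend.1]
  · linarith [hend.2]
end

section
/- Let -π/2 < γ < π/2 and 0 ≤ α < 1. For every f ∈ C_γ(α) with Taylor expansion f(z) = z + a₂z² + ⋯, one has -1 ≤ |a₂| - 1 ≤ (1-α)cos γ - 1; equivalently, |a₂| ≤ (1-α)cos γ. -/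
open Complex Metric Real

/-- For `-π/2 < γ < π/2`, `0 ≤ α < 1` and `f ∈ C_γ(α)` (γ-convex of
order α) with Taylor expansion `f(z) = z + a₂ z² + ⋯`, one has
`-1 ≤ |a₂| - 1 ≤ (1-α) cos γ - 1`, where `a₂ = iteratedDeriv 2 f 0 / 2`. -/
theorem stmt_4 (γ α : ℝ) (hγ₁ : -(π / 2) < γ) (hγ₂ : γ < π / 2)
    (hα₁ : 0 ≤ α) (hα₂ : α < 1)
    (f : ℂ → ℂ) (hf : AnalyticOnNhd ℂ f (ball 0 1))
    (hf0 : f 0 = 0) (hf1 : deriv f 0 = 1)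
    (hf' : ∀ z ∈ ball (0 : ℂ) 1, deriv f z ≠ 0)
    (hre : ∀ z ∈ ball (0 : ℂ) 1,
      α * Real.cos γ <
        (Complex.exp (-(↑γ * Complex.I)) * (1 + z * deriv (deriv f) z / deriv f z)).re) :
    -1 ≤ ‖iteratedDeriv 2 f 0 / 2‖ - 1 ∧
      ‖iteratedDeriv 2 f 0 / 2‖ - 1 ≤ (1 - α) * Real.cos γ - 1 := by
  have hcos : 0 < Real.cos γ := Real.cos_pos_of_mem_Ioo ⟨hγ₁, hγ₂⟩
  set E : ℂ := Complex.exp (-(↑γ * Complex.I)) with hEdef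
  have hEeq : E = Complex.exp (((-γ : ℝ) : ℂ) * Complex.I) := by
    rw [hEdef]; push_cast; ring_nf
  have hEre : E.re = Real.cos γ := by
    rw [hEeq, Complex.exp_ofReal_mul_I_re, Real.cos_neg]
  have hEabs : ‖E‖ = 1 := by
    rw [hEeq]; exact Complex.norm_exp_ofReal_mul_I _
  set β : ℝ := α * Real.cos γ with hβdef
  have hβlt : β < Real.cos γ := by
    rw [hβdef]; nlinarith
  set d : ℝ := 2 * ((1 - α) * Real.cos γ) with hddef
  have hd : 0 < d := by rw [hddef]; nlinarith
  set g : ℂ → ℂ := fun z => E * (1 + z * deriv (deriv f) z / deriv f z) with hgdef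
  have h0mem : (0 : ℂ) ∈ ball (0 : ℂ) 1 := by simp
  have hg0 : g 0 = E := by simp [hgdef]
  -- analyticity facts
  have hA : AnalyticOnNhd ℂ (deriv (deriv f)) (ball 0 1) := hf.deriv.deriv
  have hB : AnalyticOnNhd ℂ (deriv f) (ball 0 1) := hf.deriv
  have hgd : DifferentiableOn ℂ g (ball 0 1) := by
    apply DifferentiableOn.const_mul
    apply DifferentiableOn.add (differentiableOn_const 1)
    exact DifferentiableOn.div (differentiableOn_id.mul hA.differentiableOn)
      hB.differentiableOn hf'
  -- the auxiliary map F
  set N : ℂ → ℂ := fun z => g z - E with hNdef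
  set D : ℂ → ℂ := fun z => g z + ((starRingEnd ℂ) E - 2 * β) with hDdef
  set F : ℂ → ℂ := fun z => N z / D z with hFdef
  -- real part bound
  have hgre : ∀ z ∈ ball (0 : ℂ) 1, β < (g z).re := fun z hz => hre z hz
  -- key estimate : normSq N < normSq D on the ball
  have hkey : ∀ z ∈ ball (0 : ℂ) 1, ‖N z‖ < ‖D z‖ := by
    intro z hz
    have hu := hgre z hz
    have hNre : (N z).re = (g z).re - Real.cos γ := by
      simp [hNdef, hEre]
    have hNim : (N z).im = (g z).im - E.im := by simp [hNdef]
    have hDre : (D z).re = (g z).re + Real.cos γ - 2 * β := by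
      simp [hDdef, Complex.conj_re, hEre]; ring
    have hDim : (D z).im = (g z).im - E.im := by
      simp [hDdef, Complex.conj_im]; ring
    have hsq : ‖N z‖ ^ 2 < ‖D z‖ ^ 2 := by
      rw [Complex.sq_norm, Complex.sq_norm, Complex.normSq_apply, Complex.normSq_apply,
        hNre, hNim, hDre, hDim]
      nlinarith [hβlt, hu]
    exact lt_of_pow_lt_pow_left₀ 2 (norm_nonneg _) hsq
  have hD0 : D 0 = (d : ℂ) := by
    have : E + (starRingEnd ℂ) E = (2 * Real.cos γ : ℝ) := by
      rw [Complex.add_conj, hEre]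
    rw [hDdef]
    simp only [hg0]
    rw [hddef, hβdef]
    push_cast
    rw [← sub_eq_zero]
    have h2 : E + (starRingEnd ℂ) E = ((2 * Real.cos γ : ℝ) : ℂ) := this
    push_cast at h2
    linear_combination h2
  have hDne : ∀ z ∈ ball (0 : ℂ) 1, D z ≠ 0 := by
    intro z hz h0
    have := hkey z hz
    rw [h0, norm_zero] at this
    exact absurd this (norm_nonneg _).not_gt
  have hF0 : F 0 = 0 := by
    rw [hFdef]
    simp [hNdef, hg0]
  have hFd : DifferentiableOn ℂ F (ball 0 1) := by
    apply DifferentiableOn.div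
    · exact hgd.sub (differentiableOn_const E)
    · exact hgd.add (differentiableOn_const _)
    · exact hDne
  have hFmaps : Set.MapsTo F (ball (0 : ℂ) 1) (ball (F 0) 1) := by
    intro z hz
    rw [hF0, mem_ball, dist_zero_right]
    rw [hFdef]
    simp only [norm_div]
    rw [div_lt_one]
    · exact hkey z hz
    · have := hkey z hz
      have h2 : 0 ≤ ‖N z‖ := norm_nonneg _
      linarith
  -- Schwarz lemma
  have hschwarz : ‖deriv F 0‖ ≤ 1 := by
    have := Complex.norm_deriv_le_div_of_mapsTo_ball hFd (hFmaps.mono_right ball_subset_closedBall) one_pos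
    simpa using this
  -- compute deriv F 0
  set A : ℂ := deriv (deriv f) 0 with hAdef
  have hddA : DifferentiableAt ℂ (deriv (deriv f)) 0 := (hA 0 h0mem).differentiableAt
  have hdB : DifferentiableAt ℂ (deriv f) 0 := (hB 0 h0mem).differentiableAt
  have hq : HasDerivAt (fun z : ℂ => z * deriv (deriv f) z / deriv f z) A 0 := by
    have h1 : HasDerivAt (fun z : ℂ => z * deriv (deriv f) z)
        (1 * deriv (deriv f) 0 + 0 * deriv (deriv (deriv f)) 0) 0 :=
      (hasDerivAt_id 0).mul hddA.hasDerivAt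
    have h2 := h1.div hdB.hasDerivAt (hf1 ▸ one_ne_zero)
    refine h2.congr_deriv ?_
    rw [hf1]
    simp [hAdef]
  have hgderiv : HasDerivAt g (E * A) 0 := by
    have h3 : HasDerivAt (fun z : ℂ => 1 + z * deriv (deriv f) z / deriv f z) A 0 :=
      hq.const_add 1
    simpa using h3.const_mul E
  have hFderiv : HasDerivAt F (E * A / (d : ℂ)) 0 := by
    have hN : HasDerivAt N (E * A) 0 := hgderiv.sub_const E
    have hD : HasDerivAt D (E * A) 0 := hgderiv.add_const _
    have hN0 : N 0 = 0 := by simp [hNdef, hg0]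
    have := hN.div hD (hD0 ▸ (by exact_mod_cast hd.ne' : (d : ℂ) ≠ 0))
    refine this.congr_deriv ?_
    rw [hN0, hD0]
    have hdne : (d : ℂ) ≠ 0 := by exact_mod_cast hd.ne'
    field_simp
    ring
  have hderivval : deriv F 0 = E * A / (d : ℂ) := hFderiv.deriv
  have habsA : ‖A‖ ≤ d := by
    rw [hderivval] at hschwarz
    rw [norm_div, norm_mul, hEabs, one_mul, Complex.norm_real, Real.norm_eq_abs, abs_of_pos hd,
      div_le_one hd] at hschwarz
    exact hschwarz
  -- conclude
  have hiter : iteratedDeriv 2 f 0 = A := by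
    rw [hAdef, show (2 : ℕ) = 1 + 1 from rfl, iteratedDeriv_succ, iteratedDeriv_one]
  rw [hiter]
  constructor
  · have := norm_nonneg (A / 2)
    linarith
  · rw [norm_div]
    simp only [Complex.norm_ofNat]
    rw [hddef] at habsA
    have : ‖A‖ / 2 ≤ (1 - α) * Real.cos γ := by linarith
    simpa using by linarith [this]
end

section
/- Let 0 < λ ≤ 1. For every f ∈ G(λ) with Taylor expansion f(z) = z + a₂z² + ⋯, one has -1 ≤ |a₂| - 1 ≤ λ/2 - 1; equivalently, |a₂| ≤ λ/2. -/
open Complex Metric Real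

/-- For `0 < λ ≤ 1` and `f ∈ G(λ)` with Taylor expansion
`f(z) = z + a₂ z² + ⋯`, one has `-1 ≤ |a₂| - 1 ≤ λ/2 - 1`, where
`a₂ = iteratedDeriv 2 f 0 / 2`. -/
theorem stmt_8 (lam : ℝ) (hlam₁ : 0 < lam) (hlam₂ : lam ≤ 1)
    (f : ℂ → ℂ) (hf : AnalyticOnNhd ℂ f (ball 0 1))
    (hf0 : f 0 = 0) (hf1 : deriv f 0 = 1)
    (hf' : ∀ z ∈ ball (0 : ℂ) 1, deriv f z ≠ 0)
    (hre : ∀ z ∈ ball (0 : ℂ) 1,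
      (1 + z * deriv (deriv f) z / deriv f z).re < 1 + lam / 2) :
    -1 ≤ ‖iteratedDeriv 2 f 0 / 2‖ - 1 ∧
      ‖iteratedDeriv 2 f 0 / 2‖ - 1 ≤ lam / 2 - 1 := by
  have h0mem : (0 : ℂ) ∈ ball (0 : ℂ) 1 := mem_ball_self one_pos
  set g : ℂ → ℂ := deriv (deriv f) with hg
  have hf1A : AnalyticOnNhd ℂ (deriv f) (ball 0 1) := hf.deriv
  have hf2A : AnalyticOnNhd ℂ g (ball 0 1) := hf1A.deriv
  set h : ℂ → ℂ := fun z => z * g z / deriv f z with hh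
  -- h is differentiable on the ball
  have hdiffh : ∀ z ∈ ball (0 : ℂ) 1, DifferentiableAt ℂ h z := by
    intro z hz
    exact ((differentiableAt_id.mul (hf2A z hz).differentiableAt).div
      (hf1A z hz).differentiableAt (hf' z hz))
  -- real part bound
  have hreh : ∀ z ∈ ball (0 : ℂ) 1, (h z).re < lam / 2 := by
    intro z hz
    have H := hre z hz
    simp only [Complex.add_re, Complex.one_re] at H
    have : (h z).re = (z * g z / deriv f z).re := rfl
    rw [this]; linarith
  -- denominator nonzero
  have hden : ∀ z ∈ ball (0 : ℂ) 1, (lam : ℂ) - h z ≠ 0 := by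
    intro z hz hzero
    have he : h z = (lam : ℂ) := by linear_combination -hzero
    have H := hreh z hz
    rw [he] at H
    simp only [Complex.ofReal_re] at H
    linarith
  set u : ℂ → ℂ := fun z => h z / ((lam : ℂ) - h z) with hu
  have hh0 : h 0 = 0 := by simp [hh]
  have hu0 : u 0 = 0 := by simp [hu, hh0]
  have hdiffu : DifferentiableOn ℂ u (ball 0 1) := by
    intro z hz
    exact (((hdiffh z hz).div ((differentiableAt_const _).sub (hdiffh z hz))
      (hden z hz))).differentiableWithinAt
  have hmaps : Set.MapsTo u (ball (0 : ℂ) 1) (ball (0 : ℂ) 1) := by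
    intro z hz
    have hre' := hreh z hz
    have hne := hden z hz
    have habs : ‖h z‖ < ‖(lam : ℂ) - h z‖ := by
      have hsq : ‖h z‖ ^ 2 < ‖(lam : ℂ) - h z‖ ^ 2 := by
        rw [Complex.sq_norm, Complex.sq_norm]
        simp only [Complex.normSq_apply, Complex.sub_re, Complex.sub_im,
          Complex.ofReal_re, Complex.ofReal_im]
        nlinarith
      exact lt_of_pow_lt_pow_left₀ 2 (norm_nonneg _) hsq
    have hlt : ‖u z‖ < 1 := by
      rw [hu]
      simp only
      rw [norm_div, div_lt_one (norm_pos_iff.mpr hne)]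
      exact habs
    simpa [mem_ball, Complex.dist_eq] using hlt
  -- Schwarz lemma
  have hu0' : u 0 = (0 : ℂ) := hu0
  have hschwarz : ‖deriv u 0‖ ≤ 1 :=
    Complex.norm_deriv_le_one_of_mapsTo_ball hdiffu
      (by rw [hu0']; exact hmaps.mono_right ball_subset_closedBall) one_pos
  -- compute deriv u 0
  set A : ℂ := g 0 with hA
  have hd2 : DifferentiableAt ℂ (deriv f) 0 := (hf1A 0 h0mem).differentiableAt
  have hd3 : DifferentiableAt ℂ g 0 := (hf2A 0 h0mem).differentiableAt
  have hnum : HasDerivAt (fun z : ℂ => z * g z) A 0 := by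
    have := (hasDerivAt_id (0 : ℂ)).mul hd3.hasDerivAt
    exact this.congr_deriv (by simp [hA])
  have hhd : HasDerivAt h A 0 := by
    have := hnum.div hd2.hasDerivAt (by rw [hf1]; exact one_ne_zero)
    exact this.congr_deriv (by simp [hf1])
  have hud : HasDerivAt u (A / lam) 0 := by
    have hden0 : (lam : ℂ) - h 0 ≠ 0 := hden 0 h0mem
    have hsub : HasDerivAt (fun z => (lam : ℂ) - h z) (-A) 0 :=
      ((hasDerivAt_const 0 ((lam : ℂ))).sub hhd).congr_deriv (by simp)
    have := hhd.div hsub hden0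
    have hlamne : (lam : ℂ) ≠ 0 := by
      exact_mod_cast Complex.ofReal_ne_zero.mpr hlam₁.ne'
    have heq : (A * ((lam : ℂ) - h 0) - h 0 * -A) / ((lam : ℂ) - h 0) ^ 2 = A / lam := by
      rw [hh0]
      field_simp
      ring
    rw [heq] at this
    exact this
  have hderivu : deriv u 0 = A / lam := hud.deriv
  have hAle : ‖A‖ ≤ lam := by
    rw [hderivu] at hschwarz
    rw [norm_div] at hschwarz
    have : ‖(lam : ℂ)‖ = lam := by
      rw [Complex.norm_real, Real.norm_of_nonneg hlam₁.le]
    rw [this, div_le_one hlam₁] at hschwarz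
    exact hschwarz
  have hiter : iteratedDeriv 2 f 0 = A := by
    rw [hA, hg]
    simp [iteratedDeriv_succ, iteratedDeriv_zero]
  constructor
  · have := norm_nonneg (iteratedDeriv 2 f 0 / 2)
    linarith
  · rw [hiter, norm_div]
    have : ‖(2 : ℂ)‖ = 2 := by norm_num
    rw [this]
    linarith [hAle]
end

section
/- Let 0 < λ ≤ 1. For every f ∈ G(λ) with Taylor expansion f(z) = z + a₂z² + a₃z³ + ⋯, one has |a₃| - |a₂| ≤ λ/6. -/
open Complex Metric Real

set_option maxHeartbeats 2000000

lemma my_exp_integral (n : ℕ) (hn : 1 ≤ n) :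
    (∫ θ in (0:ℝ)..2*π, Complex.exp (-(n * θ * I))) = 0 := by
  have hc : (-(n : ℂ) * I) ≠ 0 := by
    simp [Complex.ext_iff]; positivity
  have h := integral_exp_mul_complex (a := 0) (b := 2*π) hc
  have h2 : ∀ θ : ℝ, -(n:ℂ) * I * θ = -(n * θ * I) := by intro θ; ring
  simp only [h2] at h
  rw [h]
  have h3 : -((n:ℂ) * ((2:ℝ)*(π:ℝ) : ℝ) * I) = ((-(n:ℤ) : ℤ) : ℂ) * (2 * (π:ℂ) * I) := by
    push_cast; ring
  rw [h3, Complex.exp_int_mul_two_pi_mul_I]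
  simp

lemma my_conj_integral (f : ℝ → ℂ) (a b : ℝ) :
    (∫ x in a..b, (starRingEnd ℂ) (f x)) = (starRingEnd ℂ) (∫ x in a..b, f x) := by
  simp [intervalIntegral, ← integral_conj]

lemma coeff_bound_r (g : ℂ → ℂ) (A : ℝ)
    (hg : AnalyticOnNhd ℂ g (ball 0 1)) (hg0 : g 0 = 0)
    (hre : ∀ z ∈ ball (0:ℂ) 1, (g z).re < A) (n : ℕ) (hn : 1 ≤ n)
    (r : ℝ) (hr0 : 0 < r) (hr1 : r < 1) :
    ‖iteratedDeriv n g 0‖ * r ^ n ≤ (n.factorial : ℝ) * (2 * A) := by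
  have hball : closedBall (0:ℂ) r ⊆ ball 0 1 := closedBall_subset_ball hr1
  have hgc : ContinuousOn g (closedBall (0:ℂ) r) := (hg.continuousOn).mono hball
  have hgd : ∀ z ∈ ball (0:ℂ) r \ (∅ : Set ℂ), DifferentiableAt ℂ g z := fun z hz =>
    (hg z (hball (ball_subset_closedBall hz.1))).differentiableAt
  have hmem : ∀ θ : ℝ, circleMap 0 r θ ∈ closedBall (0:ℂ) r :=
    fun θ => circleMap_mem_closedBall _ hr0.le _
  have hzne : ∀ θ : ℝ, circleMap 0 r θ ≠ 0 := fun θ => circleMap_ne_center hr0.ne'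
  have hgcont : Continuous fun θ : ℝ => g (circleMap 0 r θ) :=
    hgc.comp_continuous (continuous_circleMap 0 r) hmem
  -- power series
  have hdo : DifferentiableOn ℂ g (closedBall (0:ℂ) r) := fun z hz =>
    ((hg z (hball hz)).differentiableAt).differentiableWithinAt
  set R : NNReal := ⟨r, hr0.le⟩ with hRdef
  have hR : (R : ℝ) = r := rfl
  have hR0 : 0 < R := by rwa [← NNReal.coe_pos, hR]
  have hdo' : DifferentiableOn ℂ g (closedBall 0 (R : ℝ)) := by rwa [hR]
  have hps : HasFPowerSeriesOnBall g (cauchyPowerSeries g 0 (R:ℝ)) 0 R :=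
    hdo'.hasFPowerSeriesOnBall hR0
  have hkey : iteratedDeriv n g 0 = (n.factorial : ℂ) * (cauchyPowerSeries g 0 (R:ℝ) n fun _ => 1) := by
    have h1 := hps.factorial_smul (y := (1:ℂ)) n
    rw [iteratedDeriv_eq_iteratedFDeriv, ← h1, nsmul_eq_mul]
  -- the Fourier-type integral
  set T : ℂ := ∫ θ in (0:ℝ)..2*π, Complex.exp (-(n * θ * I)) * g (circleMap 0 r θ) with hTdef
  have hcoeff : (cauchyPowerSeries g 0 (R:ℝ) n fun _ => 1)
      = (2 * (π:ℂ))⁻¹ * (r:ℂ)⁻¹ ^ n * T := by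
    rw [cauchyPowerSeries_apply]
    have hint : ∀ θ : ℝ, (deriv (circleMap 0 r) θ) • (((1:ℂ) / (circleMap 0 r θ - 0)) ^ n •
        ((circleMap 0 r θ - 0)⁻¹ • g (circleMap 0 r θ)))
        = I * ((r:ℂ)⁻¹ ^ n * (Complex.exp (-(n * θ * I)) * g (circleMap 0 r θ))) := by
      intro θ
      have hz := hzne θ
      rw [deriv_circleMap]
      rw [smul_eq_mul, smul_eq_mul, smul_eq_mul]
      rw [circleMap_zero]
      have hexp : Complex.exp (θ * I) ≠ 0 := Complex.exp_ne_zero _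
      have hrne : (r:ℂ) ≠ 0 := by exact_mod_cast hr0.ne'
      have hpow : Complex.exp (-(θ * I)) ^ n = Complex.exp (-(n * θ * I)) := by
        rw [← Complex.exp_nat_mul]; ring_nf
      rw [sub_zero, ← hpow, Complex.exp_neg, inv_pow]
      field_simp
      have e1 : cexp (-(↑θ * I)) * (↑r * cexp (↑θ * I)) = (r:ℂ) := by
        rw [show cexp (-(↑θ * I)) * (↑r * cexp (↑θ * I))
            = ↑r * (cexp (-(↑θ * I)) * cexp (↑θ * I)) from by ring,
          ← Complex.exp_add, neg_add_cancel, Complex.exp_zero, mul_one]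
      have key : cexp (-(↑θ * I)) ^ n * (↑r * cexp (↑θ * I)) ^ n = (r:ℂ) ^ n := by
        rw [← mul_pow, e1]
      rw [div_pow, div_pow, mul_pow]
      field_simp
    rw [hR]
    simp only [circleIntegral]
    rw [intervalIntegral.integral_congr (g := fun θ => I * ((r:ℂ)⁻¹ ^ n *
        (Complex.exp (-(n * θ * I)) * g (circleMap 0 r θ)))) (fun θ _ => hint θ)]
    rw [intervalIntegral.integral_const_mul, intervalIntegral.integral_const_mul]
    rw [smul_eq_mul, ← hTdef]
    have h2π : ((π:ℂ)) ≠ 0 := by exact_mod_cast Real.pi_ne_zero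
    field_simp [Complex.I_ne_zero]
  -- vanishing positive-frequency integrals
  have hU : ∀ k : ℕ, (∫ θ in (0:ℝ)..2*π, Complex.exp (k * θ * I) * g (circleMap 0 r θ)) = 0 := by
    intro k
    cases k with
    | zero =>
      have h0 := circleIntegral_sub_center_inv_smul_of_differentiable_on_off_countable
        (f := g) (c := (0:ℂ)) (R := r) hr0 Set.countable_empty hgc hgd
      rw [hg0, smul_zero] at h0
      simp only [circleIntegral, deriv_circleMap] at h0
      rw [intervalIntegral.integral_congr (g := fun θ => I * g (circleMap 0 r θ))
        (fun θ _ => by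
          have hz := hzne θ
          rw [smul_eq_mul, smul_eq_mul, sub_zero]
          field_simp)] at h0
      rw [intervalIntegral.integral_const_mul] at h0
      rcases mul_eq_zero.mp h0 with h | h
      · exact absurd h Complex.I_ne_zero
      · simpa using h
    | succ m =>
      have hF : ∀ z ∈ ball (0:ℂ) r \ (∅ : Set ℂ), DifferentiableAt ℂ (fun z => z ^ m * g z) z :=
        fun z hz => (differentiableAt_pow m).mul (hgd z hz)
      have hFc : ContinuousOn (fun z : ℂ => z ^ m * g z) (closedBall (0:ℂ) r) :=
        (continuous_pow m).continuousOn.mul hgc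
      have h0 := circleIntegral_eq_zero_of_differentiable_on_off_countable hr0.le
        Set.countable_empty hFc hF
      simp only [circleIntegral, deriv_circleMap] at h0
      rw [intervalIntegral.integral_congr (g := fun θ => (I * (r:ℂ)^(m+1)) *
          (Complex.exp (((m+1 : ℕ) : ℂ) * θ * I) * g (circleMap 0 r θ)))
        (fun θ _ => by
          beta_reduce
          rw [smul_eq_mul, circleMap_zero]
          have hpow : Complex.exp (θ * I) ^ (m+1) = Complex.exp (((m+1:ℕ) : ℂ) * θ * I) := by
            rw [← Complex.exp_nat_mul]; ring_nf
          rw [← hpow]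
          ring)] at h0
      rw [intervalIntegral.integral_const_mul] at h0
      have hne : (I * (r:ℂ)^(m+1)) ≠ 0 := by
        have hrne : (r:ℂ) ≠ 0 := by exact_mod_cast hr0.ne'
        exact mul_ne_zero Complex.I_ne_zero (pow_ne_zero _ hrne)
      rcases mul_eq_zero.mp h0 with h | h
      · exact absurd h hne
      · exact_mod_cast h
  have hU0 : (∫ θ in (0:ℝ)..2*π, g (circleMap 0 r θ)) = 0 := by
    have := hU 0; simpa using this
  -- conjugate integral vanishes
  have hconj : (∫ θ in (0:ℝ)..2*π,
      Complex.exp (-(n * θ * I)) * (starRingEnd ℂ) (g (circleMap 0 r θ))) = 0 := by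
    have hpt : ∀ θ : ℝ, Complex.exp (-(n * θ * I)) * (starRingEnd ℂ) (g (circleMap 0 r θ))
        = (starRingEnd ℂ) (Complex.exp ((n:ℂ) * θ * I) * g (circleMap 0 r θ)) := by
      intro θ
      rw [map_mul, ← Complex.exp_conj]
      congr 2
      simp [Complex.ext_iff]
    rw [intervalIntegral.integral_congr (fun θ _ => hpt θ), my_conj_integral, hU n, map_zero]
  -- continuity haves
  have hc1 : Continuous fun θ : ℝ => Complex.exp (-(n * θ * I)) := by fun_prop
  have hc2 : Continuous fun θ : ℝ => Complex.exp (-(n * θ * I)) * g (circleMap 0 r θ) :=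
    hc1.mul hgcont
  have hc3 : Continuous fun θ : ℝ =>
      Complex.exp (-(n * θ * I)) * (starRingEnd ℂ) (g (circleMap 0 r θ)) :=
    hc1.mul (continuous_star.comp hgcont)
  -- rewrite T via the positive weight
  have hTeq : (∫ θ in (0:ℝ)..2*π, Complex.exp (-(n * θ * I)) *
      (((2*A - 2*(g (circleMap 0 r θ)).re : ℝ)) : ℂ)) = -T := by
    have hpt : ∀ θ : ℝ, Complex.exp (-(n * θ * I)) * (((2*A - 2*(g (circleMap 0 r θ)).re : ℝ)) : ℂ)
        = (((2*A:ℝ)):ℂ) * Complex.exp (-(n * θ * I))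
          - (Complex.exp (-(n * θ * I)) * g (circleMap 0 r θ)
             + Complex.exp (-(n * θ * I)) * (starRingEnd ℂ) (g (circleMap 0 r θ))) := by
      intro θ
      rw [Complex.ofReal_sub, ← Complex.add_conj]
      push_cast
      ring
    rw [intervalIntegral.integral_congr (fun θ _ => hpt θ)]
    rw [intervalIntegral.integral_sub (Continuous.intervalIntegrable (u := fun θ : ℝ =>
        (((2*A:ℝ)):ℂ) * Complex.exp (-(n * θ * I))) (continuous_const.mul hc1) _ _)
      (Continuous.intervalIntegrable (u := fun θ : ℝ => Complex.exp (-(n * θ * I)) * g (circleMap 0 r θ)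
        + Complex.exp (-(n * θ * I)) * (starRingEnd ℂ) (g (circleMap 0 r θ))) (hc2.add hc3) _ _),
      intervalIntegral.integral_add (hc2.intervalIntegrable _ _) (hc3.intervalIntegrable _ _),
      intervalIntegral.integral_const_mul, my_exp_integral n hn, hconj, ← hTdef]
    ring
  -- bound on T
  have hmem1 : ∀ θ : ℝ, circleMap 0 r θ ∈ ball (0:ℂ) 1 := fun θ => hball (hmem θ)
  have hFnn : ∀ θ : ℝ, 0 ≤ 2*A - 2*(g (circleMap 0 r θ)).re := by
    intro θ
    have := hre _ (hmem1 θ)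
    linarith
  have hre0 : (∫ θ in (0:ℝ)..2*π, (g (circleMap 0 r θ)).re) = 0 := by
    have hint : IntervalIntegrable (fun θ => g (circleMap 0 r θ))
        MeasureTheory.volume 0 (2*π) := hgcont.intervalIntegrable _ _
    have h := Complex.reCLM.intervalIntegral_comp_comm hint
    simp only [Complex.reCLM_apply] at h
    rw [h, hU0]
    simp
  have hreal : (∫ θ in (0:ℝ)..2*π, (2*A - 2*(g (circleMap 0 r θ)).re)) = 2*π*(2*A) := by
    have hint2 : IntervalIntegrable (fun θ : ℝ => 2*(g (circleMap 0 r θ)).re)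
        MeasureTheory.volume 0 (2*π) := by
      apply Continuous.intervalIntegrable
      exact continuous_const.mul (Complex.continuous_re.comp hgcont)
    rw [intervalIntegral.integral_sub (intervalIntegrable_const) hint2]
    have e2 : (∫ θ in (0:ℝ)..2*π, 2*(g (circleMap 0 r θ)).re) = 0 := by
      rw [intervalIntegral.integral_const_mul, hre0]; ring
    rw [e2, intervalIntegral.integral_const]
    simp

  have hTbound : ‖T‖ ≤ 2*π*(2*A) := by
    have h1 : ‖T‖ = ‖-T‖ := by rw [norm_neg]
    rw [h1, ← hTeq]
    calc ‖∫ θ in (0:ℝ)..2*π, Complex.exp (-(n * θ * I)) *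
          (((2*A - 2*(g (circleMap 0 r θ)).re : ℝ)) : ℂ)‖
        ≤ ∫ θ in (0:ℝ)..2*π, ‖Complex.exp (-(n * θ * I)) *
          (((2*A - 2*(g (circleMap 0 r θ)).re : ℝ)) : ℂ)‖ :=
          intervalIntegral.norm_integral_le_integral_norm (by positivity)
      _ = ∫ θ in (0:ℝ)..2*π, (2*A - 2*(g (circleMap 0 r θ)).re) := by
          apply intervalIntegral.integral_congr
          intro θ _
          beta_reduce
          rw [norm_mul, Complex.norm_exp,
            Complex.norm_real, Real.norm_eq_abs]
          have hre_exp : (-((n:ℂ) * (θ:ℂ) * I)).re = 0 := by simp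
          rw [hre_exp, Real.exp_zero, one_mul, _root_.abs_of_nonneg (hFnn θ)]
      _ = 2*π*(2*A) := hreal
  -- assemble
  have habs : ‖iteratedDeriv n g 0‖
      = (n.factorial : ℝ) * ((2*π)⁻¹ * (r⁻¹)^n * ‖T‖) := by
    rw [hkey, hcoeff]
    rw [norm_mul, norm_mul, norm_mul, norm_inv, norm_pow, norm_inv]
    rw [Complex.norm_natCast, Complex.norm_real, Real.norm_eq_abs]
    rw [show ‖2 * (π:ℂ)‖ = 2*π from by
      rw [show (2 * (π:ℂ)) = ((2*π : ℝ) : ℂ) from by push_cast; ring, Complex.norm_real, Real.norm_eq_abs]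
      rw [_root_.abs_of_nonneg (by positivity : (0:ℝ) ≤ 2*π)]]
    rw [_root_.abs_of_nonneg hr0.le]
  rw [habs]
  have hπ : (0:ℝ) < 2*π := by positivity
  have h1 : (n.factorial : ℝ) * ((2*π)⁻¹ * (r⁻¹)^n * ‖T‖) * r^n
      = (n.factorial : ℝ) * (‖T‖ / (2*π)) := by
    rw [inv_pow]
    field_simp
  rw [h1]
  have h2 : ‖T‖ / (2*π) ≤ 2*A := by
    rw [div_le_iff₀ hπ]
    calc ‖T‖ ≤ 2*π*(2*A) := hTbound
      _ = 2*A*(2*π) := by ring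
  have h3 : (0:ℝ) ≤ n.factorial := by positivity
  calc (n.factorial : ℝ) * (‖T‖ / (2*π)) ≤ (n.factorial : ℝ) * (2*A) :=
    mul_le_mul_of_nonneg_left h2 h3

lemma coeff_bound (g : ℂ → ℂ) (A : ℝ)
    (hg : AnalyticOnNhd ℂ g (ball 0 1)) (hg0 : g 0 = 0)
    (hre : ∀ z ∈ ball (0:ℂ) 1, (g z).re < A) (n : ℕ) (hn : 1 ≤ n) :
    ‖iteratedDeriv n g 0‖ ≤ (n.factorial : ℝ) * (2 * A) := by
  have key : ∀ k : ℕ, ‖iteratedDeriv n g 0‖ * (1 - (1/2:ℝ)^(k+1)) ^ n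
      ≤ (n.factorial : ℝ) * (2 * A) := by
    intro k
    have hp : (0:ℝ) < (1/2:ℝ)^(k+1) := by positivity
    have hq : (1/2:ℝ)^(k+1) ≤ 1/2 := by
      calc (1/2:ℝ)^(k+1) ≤ (1/2:ℝ)^1 :=
        pow_le_pow_of_le_one (by norm_num) (by norm_num) (by omega)
      _ = 1/2 := pow_one _
    exact coeff_bound_r g A hg hg0 hre n hn _ (by linarith) (by linarith)
  have htend : Filter.Tendsto
      (fun k : ℕ => ‖iteratedDeriv n g 0‖ * (1 - (1/2:ℝ)^(k+1)) ^ n)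
      Filter.atTop (nhds (‖iteratedDeriv n g 0‖ * (1 - 0) ^ n)) := by
    apply Filter.Tendsto.mul tendsto_const_nhds
    apply Filter.Tendsto.pow
    apply Filter.Tendsto.const_sub
    exact (tendsto_pow_atTop_nhds_zero_of_lt_one (by norm_num) (by norm_num)).comp
      (Filter.tendsto_add_atTop_nat 1)
  have := le_of_tendsto htend (Filter.Eventually.of_forall key)
  simpa using this

/-- For `0 < λ ≤ 1` and `f ∈ G(λ)`, one has `|a₃| - |a₂| ≤ λ/6`,
where `a₂ = iteratedDeriv 2 f 0 / 2` and `a₃ = iteratedDeriv 3 f 0 / 6`. -/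
theorem stmt_9 (lam : ℝ) (hlam₁ : 0 < lam) (hlam₂ : lam ≤ 1)
    (f : ℂ → ℂ) (hf : AnalyticOnNhd ℂ f (ball 0 1))
    (hf0 : f 0 = 0) (hf1 : deriv f 0 = 1)
    (hf' : ∀ z ∈ ball (0 : ℂ) 1, deriv f z ≠ 0)
    (hre : ∀ z ∈ ball (0 : ℂ) 1,
      (1 + z * deriv (deriv f) z / deriv f z).re < 1 + lam / 2) :
    ‖iteratedDeriv 3 f 0 / 6‖ - ‖iteratedDeriv 2 f 0 / 2‖ ≤
      lam / 6 := by
  have h0mem : (0:ℂ) ∈ ball (0:ℂ) 1 := by simp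
  set v := deriv f with hv
  set u := deriv v with hu
  have hfd : AnalyticOnNhd ℂ v (ball 0 1) := hf.deriv
  have hud : AnalyticOnNhd ℂ u (ball 0 1) := hfd.deriv
  set g : ℂ → ℂ := fun z => z * u z / v z with hgdef
  have hganal : AnalyticOnNhd ℂ g (ball 0 1) := by
    apply AnalyticOnNhd.div
    · exact analyticOnNhd_id.mul hud
    · exact hfd
    · exact hf'
  have hg0 : g 0 = 0 := by simp [hgdef]
  have hgre : ∀ z ∈ ball (0:ℂ) 1, (g z).re < lam/2 := by
    intro z hz
    have h := hre z hz
    rw [Complex.add_re, Complex.one_re] at h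
    simpa [hgdef] using (by linarith : (z * u z / v z).re < lam/2)
  have hb := coeff_bound g (lam/2) hganal hg0 hgre 1 le_rfl
  have hc := coeff_bound g (lam/2) hganal hg0 hgre 2 (by norm_num)
  set b := u 0 with hbdef
  set t := deriv u 0 with htdef
  have hv0 : v 0 = 1 := hf1
  have hvne : v 0 ≠ 0 := by rw [hv0]; exact one_ne_zero
  set w : ℂ → ℂ := fun z => u z / v z with hwdef
  have hwanal : AnalyticOnNhd ℂ w (ball 0 1) := hud.div hfd hf'
  have hwd : AnalyticOnNhd ℂ (deriv w) (ball 0 1) := hwanal.deriv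
  have hgw : g = fun z => z * w z := by
    funext z; simp only [hgdef, hwdef]; rw [mul_div_assoc]
  have hg_on : ∀ z ∈ ball (0:ℂ) 1, deriv g z = w z + z * deriv w z := by
    intro z hz
    have h1 : HasDerivAt w (deriv w z) z := (hwanal z hz).differentiableAt.hasDerivAt
    have h2 : HasDerivAt (fun z => z * w z) (1 * w z + z * deriv w z) z :=
      (hasDerivAt_id z).mul h1
    rw [hgw, h2.deriv]
    ring
  have hderiv1 : deriv g 0 = b := by
    rw [hg_on 0 h0mem]
    simp [hwdef, hv0, hbdef]
  have hderiv2 : deriv (deriv g) 0 = 2 * deriv w 0 := by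
    have hev : deriv g =ᶠ[nhds 0] (fun z => w z + z * deriv w z) :=
      Filter.eventuallyEq_of_mem (isOpen_ball.mem_nhds h0mem) hg_on
    rw [hev.deriv_eq]
    have h1 : HasDerivAt w (deriv w 0) 0 := (hwanal 0 h0mem).differentiableAt.hasDerivAt
    have h2 : HasDerivAt (deriv w) (deriv (deriv w) 0) 0 :=
      (hwd 0 h0mem).differentiableAt.hasDerivAt
    have h3 : HasDerivAt (fun z => z * deriv w z) (1 * deriv w 0 + 0 * deriv (deriv w) 0) 0 :=
      (hasDerivAt_id 0).mul h2
    rw [HasDerivAt.deriv (f := fun z => w z + z * deriv w z) (h1.add h3)]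
    ring
  have hw0 : deriv w 0 = t - b^2 := by
    have h1 : HasDerivAt u (deriv u 0) 0 := (hud 0 h0mem).differentiableAt.hasDerivAt
    have h2 : HasDerivAt v (deriv v 0) 0 := (hfd 0 h0mem).differentiableAt.hasDerivAt
    have h3 : HasDerivAt w ((deriv u 0 * v 0 - u 0 * deriv v 0)/(v 0)^2) 0 := h1.div h2 hvne
    rw [h3.deriv, hv0, ← hu, ← htdef, ← hbdef]
    ring
  -- translate iterated derivatives
  have e2 : (2:ℕ) = 0 + 1 + 1 := by norm_num
  have e3 : (3:ℕ) = 0 + 1 + 1 + 1 := by norm_num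
  have hit2f : iteratedDeriv 2 f 0 = b := by
    rw [e2, iteratedDeriv_succ, iteratedDeriv_succ, iteratedDeriv_zero, ← hv, ← hu, ← hbdef]
  have hit3f : iteratedDeriv 3 f 0 = t := by
    rw [e3, iteratedDeriv_succ, iteratedDeriv_succ, iteratedDeriv_succ, iteratedDeriv_zero,
      ← hv, ← hu, ← htdef]
  have hit1g : iteratedDeriv 1 g 0 = b := by rw [iteratedDeriv_one, hderiv1]
  have hit2g : iteratedDeriv 2 g 0 = 2 * (t - b^2) := by
    rw [e2, iteratedDeriv_succ, iteratedDeriv_succ, iteratedDeriv_zero, hderiv2, hw0]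
  rw [hit1g] at hb
  rw [hit2g] at hc
  have habs_b : ‖b‖ ≤ lam := by
    simp at hb
    linarith
  have habs_c : ‖t - b^2‖ ≤ lam := by
    rw [norm_mul] at hc
    simp only [Complex.norm_two] at hc
    norm_num at hc
    linarith
  have htri : ‖t‖ ≤ lam + ‖b‖ ^ 2 := by
    calc ‖t‖ = ‖(t - b^2) + b^2‖ := by ring_nf
      _ ≤ ‖t - b^2‖ + ‖b^2‖ := norm_add_le _ _
      _ = ‖t - b^2‖ + ‖b‖ ^ 2 := by rw [norm_pow]
      _ ≤ lam + ‖b‖ ^ 2 := by linarith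
  have hbb : ‖b‖ ^ 2 ≤ ‖b‖ := by
    nlinarith [norm_nonneg b]
  rw [hit2f, hit3f, norm_div, norm_div]
  have h6 : ‖(6:ℂ)‖ = 6 := by norm_num
  have h2' : ‖(2:ℂ)‖ = 2 := by norm_num
  rw [h6, h2']
  have hnn : 0 ≤ ‖b‖ := norm_nonneg b
  nlinarith [htri, habs_b, hbb]
end

section
/- Let 0 < λ ≤ 1. For every f ∈ G(λ) with Taylor expansion f(z) = z + a₂z² + a₃z³ + ⋯, one has |a₃| - |a₂| ≥ λ(4λ - 17)/(24(2 - λ)) if 0 < λ ≤ 1/2, and |a₃| - |a₂| ≥ -λ(λ + 2)/6 if 1/2 ≤ λ ≤ 1. -/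
open Complex Metric Real Set

private lemma stmt10_key (lam t s X2 X3 : ℝ) (hl0 : 0 < lam) (hl1 : lam ≤ 1) (ht0 : 0 ≤ t) (ht1 : t ≤ 1)
    (hs0 : 0 ≤ s) (hs : s ≤ 1 - t^2) (hX2 : X2 = lam*t/2) (hX30 : 0 ≤ X3)
    (hX3 : (lam*(1-lam)*t^2 - lam*s)/6 ≤ X3) :
    (lam ≤ 1/2 → lam*(4*lam-17)/(24*(2-lam)) ≤ X3 - X2) ∧
    (1/2 ≤ lam → -(lam*(lam+2))/6 ≤ X3 - X2) := by
  have h2l : (0:ℝ) < 2 - lam := by linarith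
  have hX3' : lam*((2-lam)*t^2-1)/6 ≤ X3 := by
    refine le_trans ?_ hX3
    have : lam * s ≤ lam * (1 - t^2) := by nlinarith
    nlinarith
  constructor
  · intro hhalf
    rw [div_le_iff₀ (by positivity : (0:ℝ) < 24*(2-lam))]
    rcases le_or_gt ((2-lam)*t^2) 1 with hreg | hreg
    · -- use X3 ≥ 0; need 12(2-lam)t ≤ 17-4lam
      have h1 : (12*(2-lam)*t)^2 ≤ 144*(2-lam) := by nlinarith
      have h2 : 144*(2-lam) ≤ (17-4*lam)^2 := by nlinarith [sq_nonneg (4*lam+1)]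
      have h3 : 12*(2-lam)*t ≤ 17-4*lam := by nlinarith
      nlinarith
    · have := hX3'
      nlinarith [sq_nonneg (2*(2-lam)*t - 3)]
  · intro hhalf
    rcases le_or_gt ((2-lam)*t^2) 1 with hreg | hreg
    · -- need 3t ≤ lam+2
      have h1 : (3*t)^2*(2-lam) ≤ 9 := by nlinarith
      have h2 : (9:ℝ) ≤ (lam+2)^2*(2-lam) := by nlinarith [mul_nonneg (sub_nonneg.2 hl1) (by nlinarith : (0:ℝ) ≤ lam^2+3*lam-1)]
      have h3 : 3*t ≤ lam+2 := by nlinarith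
      nlinarith
    · have hta : (2-lam)*t ≤ 2-lam := by nlinarith
      have h4 : (0:ℝ) ≤ (1-t)*(1+lam-(2-lam)*t) := mul_nonneg (by linarith) (by linarith)
      have h5 : 0 ≤ lam * ((1-t)*(1+lam-(2-lam)*t)) := mul_nonneg hl0.le h4
      have h6 : lam * ((1-t)*(1+lam-(2-lam)*t)) = lam*((2-lam)*t^2-1) - 3*(lam*t) + lam*(lam+2) := by ring
      rw [hX2]
      linarith [hX3']


/-- For `0 < λ ≤ 1` and `f ∈ G(λ)`, one has
`|a₃| - |a₂| ≥ λ(4λ - 17)/(24(2 - λ))` when `0 < λ ≤ 1/2`, and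
`|a₃| - |a₂| ≥ -λ(λ + 2)/6` when `1/2 ≤ λ ≤ 1`, where
`a₂ = iteratedDeriv 2 f 0 / 2` and `a₃ = iteratedDeriv 3 f 0 / 6`. -/
theorem stmt_10 (lam : ℝ) (hlam₁ : 0 < lam) (hlam₂ : lam ≤ 1)
    (f : ℂ → ℂ) (hf : AnalyticOnNhd ℂ f (ball 0 1))
    (hf0 : f 0 = 0) (hf1 : deriv f 0 = 1)
    (hf' : ∀ z ∈ ball (0 : ℂ) 1, deriv f z ≠ 0)
    (hre : ∀ z ∈ ball (0 : ℂ) 1,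
      (1 + z * deriv (deriv f) z / deriv f z).re < 1 + lam / 2) :
    (lam ≤ 1 / 2 →
      lam * (4 * lam - 17) / (24 * (2 - lam)) ≤
        ‖iteratedDeriv 3 f 0 / 6‖ - ‖iteratedDeriv 2 f 0 / 2‖) ∧
    (1 / 2 ≤ lam →
      -(lam * (lam + 2)) / 6 ≤
        ‖iteratedDeriv 3 f 0 / 6‖ - ‖iteratedDeriv 2 f 0 / 2‖) := by
  set S := ball (0:ℂ) 1 with hS
  have h0S : (0:ℂ) ∈ S := mem_ball_self one_pos
  set F1 := deriv f with hF1def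
  set F2 := deriv F1 with hF2def
  have hF1 : AnalyticOnNhd ℂ F1 S := hf.deriv
  have hF2 : AnalyticOnNhd ℂ F2 S := hF1.deriv
  set v : ℂ → ℂ := fun z => F2 z / F1 z with hvdef
  have hv : AnalyticOnNhd ℂ v S := hF2.div hF1 hf'
  set u : ℂ → ℂ := fun z => z * v z with hudef
  have hu : AnalyticOnNhd ℂ u S := (analyticOnNhd_id).mul hv
  have hure : ∀ z ∈ S, (u z).re < lam / 2 := by
    intro z hz
    have h := hre z hz
    rw [mul_div_assoc] at h
    rw [Complex.add_re, Complex.one_re] at h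
    have hu' : (u z).re = (z * (F2 z / F1 z)).re := rfl
    linarith
  have hlamC : (lam:ℂ) ≠ 0 := Complex.ofReal_ne_zero.2 hlam₁.ne'
  have hd0 : ∀ z ∈ S, (lam:ℂ) - u z ≠ 0 := by
    intro z hz h
    have h1 : ((lam:ℂ) - u z).re = lam - (u z).re := by simp
    rw [h] at h1
    simp at h1
    have := hure z hz
    linarith
  set ω : ℂ → ℂ := fun z => u z / ((lam:ℂ) - u z) with hwdef
  have hω : AnalyticOnNhd ℂ ω S := hu.div ((analyticOnNhd_const).sub hu) hd0
  have hu0 : u 0 = 0 := by simp [hudef]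
  have hω0 : ω 0 = 0 := by simp [hwdef, hu0]
  have habs : ∀ z ∈ S, ‖u z‖ < ‖(lam:ℂ) - u z‖ := by
    intro z hz
    have h1 : Complex.normSq ((lam:ℂ) - u z) - Complex.normSq (u z)
        = lam^2 - 2*lam*(u z).re := by
      simp [Complex.normSq_apply, Complex.sub_re, Complex.sub_im]
      ring
    have h2 := hure z hz
    have h3 : Complex.normSq (u z) < Complex.normSq ((lam:ℂ) - u z) := by nlinarith
    apply lt_of_pow_lt_pow_left₀ 2 (norm_nonneg _)
    rw [Complex.sq_norm, Complex.sq_norm]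
    exact h3
  have hωmaps : MapsTo ω S (ball (ω 0) 1) := by
    rw [hω0]
    intro z hz
    rw [mem_ball_zero_iff]
    have hd := hd0 z hz
    have h1 : ‖ω z‖ = ‖u z‖ / ‖(lam:ℂ) - u z‖ := by
      simp [hwdef, norm_div]
    rw [h1]
    exact (div_lt_one (norm_pos_iff.2 hd)).2 (habs z hz)
  set g := dslope ω 0 with hgdef
  have hgdiff : DifferentiableOn ℂ g S :=
    (differentiableOn_dslope (isOpen_ball.mem_nhds h0S)).mpr hω.differentiableOn
  have hgle : ∀ z ∈ S, ‖g z‖ ≤ 1 := by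
    intro z hz
    have := Complex.norm_dslope_le_div_of_mapsTo_ball hω.differentiableOn (hωmaps.mono_right ball_subset_closedBall) hz
    simpa using this
  -- derivative computations
  have hvat : DifferentiableAt ℂ v 0 := (hv 0 h0S).differentiableAt
  have hF10 : F1 0 = 1 := hf1
  have hv0 : v 0 = F2 0 := by rw [hvdef]; simp [hF10]
  have huA : HasDerivAt u (v 0) 0 := by
    have h1 : HasDerivAt (fun z : ℂ => z) 1 0 := hasDerivAt_id 0
    have h2 := h1.fun_mul hvat.hasDerivAt
    simpa using h2
  have hωat : DifferentiableAt ℂ ω 0 := (hω 0 h0S).differentiableAt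
  have hwid : ∀ z ∈ S, ω z * ((lam:ℂ) - u z) = u z := fun z hz => div_mul_cancel₀ _ (hd0 z hz)
  have hEq : u =ᶠ[nhds 0] (fun z => ω z * ((lam:ℂ) - u z)) :=
    (Filter.eventuallyEq_of_mem (isOpen_ball.mem_nhds h0S) hwid).symm
  have hLHS : HasDerivAt (fun z => ω z * ((lam:ℂ) - u z))
      (deriv ω 0 * ((lam:ℂ) - u 0) + ω 0 * (0 - v 0)) 0 :=
    hωat.hasDerivAt.mul ((hasDerivAt_const 0 ((lam:ℂ))).sub huA)
  have hderu : HasDerivAt u (deriv ω 0 * (lam:ℂ)) 0 := by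
    have h3 := hLHS.congr_of_eventuallyEq hEq
    simpa [hω0, hu0] using h3
  have hb1 : deriv ω 0 * (lam:ℂ) = v 0 := hderu.unique huA
  have hg0 : g 0 = deriv ω 0 := dslope_same ω 0
  have hI2 : ∀ z ∈ S, v z = g z * ((lam:ℂ) - u z) := by
    intro z hz
    rcases eq_or_ne z 0 with rfl | hz0
    · rw [hg0, hu0, sub_zero]
      exact hb1.symm
    · rw [hgdef, dslope_of_ne _ hz0, slope_def_field, hω0, sub_zero, sub_zero]
      have hd := hd0 z hz
      rw [hwdef]
      field_simp [hudef]
      ring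
  have hgat : DifferentiableAt ℂ g 0 := hgdiff.differentiableAt (isOpen_ball.mem_nhds h0S)
  have hEq2 : v =ᶠ[nhds 0] (fun z => g z * ((lam:ℂ) - u z)) :=
    Filter.eventuallyEq_of_mem (isOpen_ball.mem_nhds h0S) hI2
  have hRHS2 : HasDerivAt (fun z => g z * ((lam:ℂ) - u z))
      (deriv g 0 * ((lam:ℂ) - u 0) + g 0 * (0 - v 0)) 0 :=
    hgat.hasDerivAt.mul ((hasDerivAt_const 0 ((lam:ℂ))).sub huA)
  have hvderiv : HasDerivAt v (deriv g 0 * (lam:ℂ) - g 0 * v 0) 0 := by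
    have h4 := hRHS2.congr_of_eventuallyEq hEq2
    rw [hu0, sub_zero, zero_sub] at h4
    have e : deriv g 0 * (lam:ℂ) - g 0 * v 0 = deriv g 0 * (lam:ℂ) + g 0 * -v 0 := by ring
    rw [e]
    exact h4
  have hI1 : ∀ z ∈ S, F2 z = v z * F1 z := fun z hz => (div_mul_cancel₀ _ (hf' z hz)).symm
  have hEq1 : F2 =ᶠ[nhds 0] (fun z => v z * F1 z) :=
    Filter.eventuallyEq_of_mem (isOpen_ball.mem_nhds h0S) hI1
  have hF1at : DifferentiableAt ℂ F1 0 := (hF1 0 h0S).differentiableAt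
  have hF1d : HasDerivAt F1 (F2 0) 0 := by
    rw [hF2def] at *
    exact hF1at.hasDerivAt
  have hF2D : HasDerivAt F2 (deriv F2 0) 0 := ((hF2 0 h0S).differentiableAt).hasDerivAt
  have hRHS1 : HasDerivAt (fun z => v z * F1 z) (deriv v 0 * F1 0 + v 0 * F2 0) 0 :=
    hvat.hasDerivAt.mul hF1d
  have hBeq : deriv F2 0 = deriv v 0 * F1 0 + v 0 * F2 0 :=
    hF2D.unique (hRHS1.congr_of_eventuallyEq hEq1)
  have hvd0 : deriv v 0 = deriv g 0 * (lam:ℂ) - g 0 * v 0 := hvderiv.deriv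
  -- Schwarz-Pick bound: abs (deriv g 0) ≤ 1 - (abs (g 0))^2
  have hsp : ‖deriv g 0‖ ≤ 1 - (‖g 0‖)^2 := by
    by_cases hcase : ∀ z ∈ S, ‖g z‖ < 1
    · -- strict case, Möbius trick
      have hb1lt : ‖g 0‖ < 1 := by simpa using hcase 0 h0S
      set c := (starRingEnd ℂ) (g 0) with hcdef
      have habsc : ‖c‖ = ‖g 0‖ := by simp [hcdef]
      have hden : ∀ z ∈ S, (1:ℂ) - c * g z ≠ 0 := by
        intro z hz h
        have h1 : ‖c * g z‖ < 1 := by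
          rw [norm_mul, habsc]
          have h2 := hcase z hz
          nlinarith [norm_nonneg (g z), norm_nonneg (g 0)]
        have h3 : c * g z = 1 := by linear_combination -h
        rw [h3] at h1
        simp at h1
      set h : ℂ → ℂ := fun z => (g z - g 0) * ((1:ℂ) - c * g z)⁻¹ with hhdef
      have hhdiff : DifferentiableOn ℂ h S :=
        (hgdiff.sub (differentiableOn_const _)).mul
          (((differentiableOn_const 1).sub ((differentiableOn_const c).mul hgdiff)).inv hden)
      have hh0 : h 0 = 0 := by simp [hhdef]
      have hhmaps : MapsTo h S (ball (h 0) 1) := by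
        rw [hh0]
        intro z hz
        rw [mem_ball_zero_iff]
        have hzlt : Complex.normSq (g z) < 1 := by
          rw [Complex.normSq_eq_norm_sq]
          have h2 := hcase z hz
          nlinarith [norm_nonneg (g z)]
        have hblt : Complex.normSq (g 0) < 1 := by
          rw [Complex.normSq_eq_norm_sq]
          nlinarith [norm_nonneg (g 0)]
        have hkey : Complex.normSq ((1:ℂ) - c * g z) - Complex.normSq (g z - g 0)
            = (1 - Complex.normSq (g 0)) * (1 - Complex.normSq (g z)) := by
          simp [Complex.normSq_apply, hcdef, Complex.mul_re, Complex.mul_im,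
            Complex.sub_re, Complex.sub_im]
          ring
        have habslt : ‖g z - g 0‖ < ‖(1:ℂ) - c * g z‖ := by
          apply lt_of_pow_lt_pow_left₀ 2 (norm_nonneg _)
          rw [Complex.sq_norm, Complex.sq_norm]
          nlinarith
        have h1 : ‖h z‖ = ‖g z - g 0‖ / ‖(1:ℂ) - c * g z‖ := by
          rw [hhdef]
          simp [norm_mul, norm_inv, div_eq_mul_inv]
        rw [h1]
        exact (div_lt_one (norm_pos_iff.2 (hden z hz))).2 habslt
      have hhd1 : ‖deriv h 0‖ ≤ 1 := by
        have := Complex.norm_deriv_le_div_of_mapsTo_ball hhdiff (hhmaps.mono_right ball_subset_closedBall) one_pos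
        simpa using this
      -- compute deriv h 0
      have hden0 : (1:ℂ) - c * g 0 ≠ 0 := hden 0 h0S
      have hinner : HasDerivAt (fun z => (1:ℂ) - c * g z) (-(c * deriv g 0)) 0 := by
        have h5 := (hasDerivAt_const (0:ℂ) (1:ℂ)).fun_sub ((hasDerivAt_const (0:ℂ) c).fun_mul hgat.hasDerivAt)
        simpa using h5
      have hQ := hinner.fun_inv hden0
      have hP : HasDerivAt (fun z => g z - g 0) (deriv g 0) 0 := hgat.hasDerivAt.sub_const _
      have hH := hP.fun_mul hQ
      have hderh : deriv h 0 = deriv g 0 * ((1:ℂ) - c * g 0)⁻¹ := by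
        have h6 := hH.deriv
        rw [hhdef]
        rw [h6]
        simp
      have hcb1 : (1:ℂ) - c * g 0 = ((1 - Complex.normSq (g 0) : ℝ) : ℂ) := by
        rw [hcdef]
        rw [mul_comm, Complex.mul_conj]
        push_cast
        ring
      have hblt0 : Complex.normSq (g 0) < 1 := by
        rw [Complex.normSq_eq_norm_sq]
        nlinarith [norm_nonneg (g 0)]
      have h7 : ‖deriv h 0‖
          = ‖deriv g 0‖ / (1 - Complex.normSq (g 0)) := by
        rw [hderh, norm_mul, norm_inv, hcb1, Complex.norm_real, Real.norm_eq_abs,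
          abs_of_pos (by linarith), div_eq_mul_inv]
      rw [h7] at hhd1
      have h8 : ‖deriv g 0‖ ≤ 1 - Complex.normSq (g 0) := by
        rw [div_le_one (by linarith)] at hhd1
        exact hhd1
      rwa [Complex.normSq_eq_norm_sq] at h8
    · -- max modulus case: g is constant
      push_neg at hcase
      obtain ⟨z₀, hz₀S, hz₀⟩ := hcase
      have hmax : IsMaxOn (norm ∘ g) S z₀ := by
        intro z hz
        simp only [Function.comp_apply]
        exact le_trans (hgle z hz) hz₀
      have hconst := Complex.eqOn_of_isPreconnected_of_isMaxOn_norm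
        (convex_ball (0:ℂ) 1).isPreconnected isOpen_ball hgdiff hz₀S hmax
      have hg0c : g 0 = g z₀ := hconst h0S
      have hb2 : deriv g 0 = 0 := by
        have h9 : g =ᶠ[nhds 0] (fun _ => g z₀) :=
          Filter.eventuallyEq_of_mem (isOpen_ball.mem_nhds h0S) hconst
        rw [h9.deriv_eq]
        exact deriv_const _ _
      have ht : ‖g 0‖ = 1 := by
        rw [hg0c]
        refine le_antisymm ?_ ?_
        · simpa using hgle z₀ hz₀S
        · simpa using hz₀
      rw [hb2, ht]
      simp
  set b1 := g 0 with hb1def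
  set b2 := deriv g 0 with hb2def
  set t := ‖b1‖ with htdef
  set s := ‖b2‖ with hsdef
  have hA : F2 0 = (lam:ℂ) * b1 := by
    rw [hg0]
    linear_combination -hv0 - hb1
  have hB : deriv F2 0 = (lam:ℂ) * b2 - (lam:ℂ)*(1-(lam:ℂ))*b1^2 := by
    rw [hBeq, hF10, hvd0, hv0, hA]; ring
  have ht1 : t ≤ 1 := by simpa using hgle 0 h0S
  have ht0 : 0 ≤ t := norm_nonneg _
  have hs0 : 0 ≤ s := norm_nonneg _
  have hss : s ≤ 1 - t^2 := hsp
  have hit2 : iteratedDeriv 2 f 0 = F2 0 := by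
    rw [show (2:ℕ) = 1 + 1 from rfl, iteratedDeriv_succ, iteratedDeriv_one]
  have hit3 : iteratedDeriv 3 f 0 = deriv F2 0 := by
    rw [show (3:ℕ) = 1 + 1 + 1 from rfl, iteratedDeriv_succ, iteratedDeriv_succ,
      iteratedDeriv_one]
  have hX2 : ‖iteratedDeriv 2 f 0 / 2‖ = lam * t / 2 := by
    rw [hit2, hA, norm_div, norm_mul]
    simp [_root_.abs_of_pos hlam₁, htdef]
  have hX3 : (lam*(1-lam)*t^2 - lam*s)/6 ≤ ‖iteratedDeriv 3 f 0 / 6‖ := by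
    rw [hit3, hB, norm_div]
    have h6 : ‖(6:ℂ)‖ = 6 := by
      norm_num
    rw [h6]
    have hXa : ‖(lam:ℂ)*(1-(lam:ℂ))*b1^2‖ = lam*(1-lam)*t^2 := by
      have h11 : ((lam:ℂ)*(1-(lam:ℂ))*b1^2) = ((lam*(1-lam):ℝ):ℂ) * b1^2 := by
        push_cast; ring
      rw [h11, norm_mul, norm_pow, Complex.norm_real, Real.norm_eq_abs,
        _root_.abs_of_nonneg (by nlinarith : (0:ℝ) ≤ lam*(1-lam))]
    have hYa : ‖(lam:ℂ)*b2‖ = lam*s := by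
      rw [norm_mul, Complex.norm_real, Real.norm_eq_abs, _root_.abs_of_pos hlam₁]
    have h10 := norm_sub_norm_le ((lam:ℂ)*(1-(lam:ℂ))*b1^2) ((lam:ℂ)*b2)
    rw [norm_sub_rev] at h10
    rw [hXa, hYa] at h10
    linarith
  exact stmt10_key lam t s _ _ hlam₁ hlam₂ ht0 ht1 hs0 hss hX2
    (norm_nonneg _) hX3
end

section
/- (Libera–Złotkiewicz) Let c₁ be a real number with -2 ≤ c₁ ≤ 2 and let c₂, c₃ ∈ ℂ. There exists p ∈ 𝒫 whose Taylor expansion p(z) = 1 + c₁z + c₂z² + c₃z³ + ⋯ has these prescribed first three coefficients if and only if there exist x, y ∈ ℂ with |x| ≤ 1 and |y| ≤ 1 such that 2c₂ = c₁² + (4 - c₁²)x and 4c₃ = c₁³ + 2(4 - c₁²)c₁x - (4 - c₁²)c₁x² + 2(4 - c₁²)(1 - |x|²)y. -/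
open Complex Metric Real

noncomputable section LZaux
open Topology Filter

private lemma lz_expand (f : ℂ → ℂ) (z : ℂ) : f z = f 0 + z * dslope f 0 z := by
  have h := sub_smul_dslope f 0 z
  simp only [sub_zero, smul_eq_mul] at h
  linear_combination -h

private lemma lz_dslope_analytic {f : ℂ → ℂ}
    (hf : AnalyticOnNhd ℂ f (ball 0 1)) : AnalyticOnNhd ℂ (dslope f 0) (ball 0 1) := by
  intro z hz
  rcases eq_or_ne z 0 with rfl | hne
  · obtain ⟨P, hP⟩ := hf 0 (by simp)
    exact (hP.has_fpower_series_dslope_fslope).analyticAt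
  · have h1 : AnalyticAt ℂ (fun w => (w - 0)⁻¹ • (f w - f 0)) z := by
      exact ((analyticAt_id.sub analyticAt_const).inv (by simpa using hne)).smul
        ((hf z hz).sub analyticAt_const)
    apply h1.congr
    filter_upwards [isOpen_ne.mem_nhds (x := z) (by simpa using hne)] with w hw
    rw [dslope_of_ne f (by simpa using hw)]
    simp [slope_def_module]

private lemma lz_coeff_bridge {f : ℂ → ℂ} (hf : AnalyticAt ℂ f 0) (n : ℕ) :
    iteratedDeriv n f 0 = ((Nat.factorial n : ℕ) : ℂ) * ((Function.swap dslope 0)^[n] f 0) := by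
  obtain ⟨P, hP⟩ := hf
  obtain ⟨r, hr⟩ := hP
  have h2 := hr.factorial_smul (1 : ℂ) n
  have h5 := (hr.hasFPowerSeriesAt.has_fpower_series_iterate_dslope_fslope n)
  have h6 : (FormalMultilinearSeries.fslope^[n] P).coeff 0 = (Function.swap dslope 0)^[n] f 0 :=
    h5.coeff_zero 1
  have h4 : (FormalMultilinearSeries.fslope^[n] P).coeff 0 = P.coeff n := by
    rw [FormalMultilinearSeries.coeff_iterate_fslope]; simp
  rw [iteratedDeriv_eq_iteratedFDeriv, ← h2]
  have h7 : (P n fun _ => 1) = P.coeff n := rfl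
  rw [h7, ← h4, h6, nsmul_eq_mul]

private lemma lz_cancel {F G : ℂ → ℂ}
    (hF : AnalyticOnNhd ℂ F (ball 0 1)) (hG : AnalyticOnNhd ℂ G (ball 0 1))
    (h : ∀ z ∈ ball (0:ℂ) 1, z * F z = z * G z) :
    ∀ z ∈ ball (0:ℂ) 1, F z = G z := by
  intro z hz
  rcases eq_or_ne z 0 with rfl | hne
  · have hFc : Filter.Tendsto F (𝓝[≠] (0:ℂ)) (𝓝 (F 0)) :=
      ((hF 0 (by simp)).continuousAt.tendsto).mono_left nhdsWithin_le_nhds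
    have hGc : Filter.Tendsto G (𝓝[≠] (0:ℂ)) (𝓝 (G 0)) :=
      ((hG 0 (by simp)).continuousAt.tendsto).mono_left nhdsWithin_le_nhds
    have hev : F =ᶠ[𝓝[≠] (0:ℂ)] G := by
      have hball : ball (0:ℂ) 1 ∈ 𝓝[≠] (0:ℂ) :=
        nhdsWithin_le_nhds (ball_mem_nhds 0 one_pos)
      filter_upwards [hball, self_mem_nhdsWithin] with w hw hw0
      exact mul_left_cancel₀ hw0 (h w hw)
    exact tendsto_nhds_unique hFc (hGc.congr' hev.symm)
  · exact mul_left_cancel₀ hne (h z hz)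

end LZaux

section LZaux2
open Complex Metric Topology Filter

private lemma lz_one_sub_ne {a : ℂ} (h : ‖a‖ < 1) : 1 - a ≠ 0 := by
  intro hc
  have : a = 1 := by linear_combination -hc
  rw [this] at h; simp at h

private lemma lz_normSq_lt_one {a : ℂ} (h : ‖a‖ < 1) : Complex.normSq a < 1 := by
  rw [← Complex.sq_norm]
  nlinarith [norm_nonneg a]

private lemma lz_normSq_le_one {a : ℂ} (h : ‖a‖ ≤ 1) : Complex.normSq a ≤ 1 := by
  rw [← Complex.sq_norm]
  nlinarith [norm_nonneg a]

/-- Möbius bound, non-strict. -/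
private lemma lz_mobius_le {γ w : ℂ} (hγ : ‖γ‖ ≤ 1) (hw : ‖w‖ < 1) :
    ‖((γ + w) / (1 + (starRingEnd ℂ) γ * w))‖ ≤ 1 := by
  have hne : 1 + (starRingEnd ℂ) γ * w ≠ 0 := by
    have : ‖((starRingEnd ℂ) γ * w)‖ < 1 := by
      rw [norm_mul, Complex.norm_conj]
      calc ‖γ‖ * ‖w‖ ≤ 1 * ‖w‖ := by
            exact mul_le_mul_of_nonneg_right hγ (norm_nonneg w)
        _ < 1 := by simpa using hw
    have := lz_one_sub_ne (a := -((starRingEnd ℂ) γ * w)) (by simpa using this)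
    simpa [sub_neg_eq_add] using this
  rw [norm_div, div_le_one (norm_pos_iff.mpr hne)]
  have key : Complex.normSq (γ + w) ≤ Complex.normSq (1 + (starRingEnd ℂ) γ * w) := by
    have h1 : Complex.normSq γ ≤ 1 := lz_normSq_le_one hγ
    have h2 : Complex.normSq w < 1 := lz_normSq_lt_one hw
    simp only [Complex.normSq_apply, Complex.add_re, Complex.add_im, Complex.one_re,
      Complex.one_im, Complex.mul_re, Complex.mul_im, Complex.conj_re, Complex.conj_im] at *
    nlinarith [sq_nonneg (γ.re*w.re + γ.im*w.im), sq_nonneg (γ.re*w.im - γ.im*w.re)]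
  calc ‖(γ + w)‖ = Real.sqrt (Complex.normSq (γ + w)) := by
        rw [Complex.norm_def]
    _ ≤ Real.sqrt (Complex.normSq (1 + (starRingEnd ℂ) γ * w)) := Real.sqrt_le_sqrt key
    _ = ‖(1 + (starRingEnd ℂ) γ * w)‖ := by rw [Complex.norm_def]

/-- Möbius bound, strict. -/
private lemma lz_mobius_lt {γ w : ℂ} (hγ : ‖γ‖ < 1) (hw : ‖w‖ < 1) :
    ‖((w - γ) / (1 - (starRingEnd ℂ) γ * w))‖ < 1 := by
  have habs : ‖((starRingEnd ℂ) γ * w)‖ < 1 := by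
    rw [norm_mul, Complex.norm_conj]
    nlinarith [norm_nonneg γ, norm_nonneg w]
  have hne : 1 - (starRingEnd ℂ) γ * w ≠ 0 := lz_one_sub_ne habs
  rw [norm_div, div_lt_one (norm_pos_iff.mpr hne)]
  have key : Complex.normSq (w - γ) < Complex.normSq (1 - (starRingEnd ℂ) γ * w) := by
    have h1 : Complex.normSq γ < 1 := lz_normSq_lt_one hγ
    have h2 : Complex.normSq w < 1 := lz_normSq_lt_one hw
    simp only [Complex.normSq_apply, Complex.sub_re, Complex.sub_im, Complex.one_re,
      Complex.one_im, Complex.mul_re, Complex.mul_im, Complex.conj_re, Complex.conj_im] at *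
    nlinarith [sq_nonneg (γ.re*w.re + γ.im*w.im), sq_nonneg (γ.re*w.im - γ.im*w.re)]
  calc ‖(w - γ)‖ = Real.sqrt (Complex.normSq (w - γ)) := by rw [Complex.norm_def]
    _ < Real.sqrt (Complex.normSq (1 - (starRingEnd ℂ) γ * w)) := by
        apply Real.sqrt_lt_sqrt (Complex.normSq_nonneg _) key
    _ = ‖(1 - (starRingEnd ℂ) γ * w)‖ := by rw [Complex.norm_def]

end LZaux2

section LZaux3
open Complex Metric Topology Filter

/-- Maximum modulus: if a Schur-bounded analytic function attains modulus 1 at the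
center, it is constant on the ball. -/
private lemma lz_maxmod_const {f : ℂ → ℂ} (hf : AnalyticOnNhd ℂ f (ball 0 1))
    (hb : ∀ z ∈ ball (0:ℂ) 1, ‖f z‖ ≤ 1) (h0 : ‖f 0‖ = 1) :
    ∀ z ∈ ball (0:ℂ) 1, f z = f 0 := by
  intro z hz
  have := Complex.eqOn_of_isPreconnected_of_isMaxOn_norm
    (convex_ball (0:ℂ) 1).isPreconnected isOpen_ball hf.differentiableOn (mem_ball_self one_pos)
    (fun w hw => by
      simp only [Function.comp_apply, Set.mem_setOf_eq]
      rw [h0]; exact hb w hw)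
  exact this hz

/-- Dichotomy: a Schur function with `|f 0| < 1` satisfies `|f| < 1` everywhere. -/
private lemma lz_schur_lt {f : ℂ → ℂ} (hf : AnalyticOnNhd ℂ f (ball 0 1))
    (hb : ∀ z ∈ ball (0:ℂ) 1, ‖f z‖ ≤ 1)
    (h0 : ‖f 0‖ < 1) :
    ∀ z ∈ ball (0:ℂ) 1, ‖f z‖ < 1 := by
  intro z hz
  rcases lt_or_eq_of_le (hb z hz) with h | h
  · exact h
  · exfalso
    have := Complex.eqOn_of_isPreconnected_of_isMaxOn_norm
      (convex_ball (0:ℂ) 1).isPreconnected isOpen_ball hf.differentiableOn hz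
      (fun w hw => by
        simp only [Function.comp_apply, Set.mem_setOf_eq]
        rw [h]; exact hb w hw)
    have h00 := this (mem_ball_self one_pos)
    simp only [Function.const_apply] at h00
    rw [h00] at h0
    rw [← h] at h0
    exact lt_irrefl _ h0

/-- One step of the Schur algorithm. -/
private lemma lz_schur_step {g : ℂ → ℂ} (hg : AnalyticOnNhd ℂ g (ball 0 1))
    (hlt : ∀ z ∈ ball (0:ℂ) 1, ‖g z‖ < 1) :
    ∃ h : ℂ → ℂ, AnalyticOnNhd ℂ h (ball 0 1) ∧ (∀ z ∈ ball (0:ℂ) 1, ‖h z‖ ≤ 1) ∧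
      (∀ z ∈ ball (0:ℂ) 1, g z = g 0 + z * h z * (1 - (starRingEnd ℂ) (g 0) * g z)) := by
  set γ := g 0 with hγdef
  have hγ : ‖γ‖ < 1 := hlt 0 (by simp)
  have hden : ∀ z ∈ ball (0:ℂ) 1, 1 - (starRingEnd ℂ) γ * g z ≠ 0 := by
    intro z hz
    apply lz_one_sub_ne
    rw [norm_mul, Complex.norm_conj]
    nlinarith [norm_nonneg γ, norm_nonneg (g z), hlt z hz]
  set m : ℂ → ℂ := fun z => (g z - γ) / (1 - (starRingEnd ℂ) γ * g z) with hmdef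
  have hm_an : AnalyticOnNhd ℂ m (ball 0 1) := by
    intro z hz
    exact ((hg z hz).sub analyticAt_const).div
      (analyticAt_const.sub (analyticAt_const.mul (hg z hz))) (hden z hz)
  have hm0 : m 0 = 0 := by simp [hmdef, hγdef]
  have hmlt : ∀ z ∈ ball (0:ℂ) 1, ‖m z‖ < 1 := fun z hz =>
    lz_mobius_lt hγ (hlt z hz)
  refine ⟨dslope m 0, lz_dslope_analytic hm_an, ?_, ?_⟩
  · intro z hz
    have := Complex.norm_dslope_le_div_of_mapsTo_ball (c := 0) (R₁ := 1) (R₂ := 1)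
      hm_an.differentiableOn (fun w hw => by rw [hm0]; simpa using (hmlt w hw).le) hz
    simpa using this
  · intro z hz
    have hexp := lz_expand m z
    rw [hm0] at hexp
    have : m z * (1 - (starRingEnd ℂ) γ * g z) = g z - γ := by
      rw [hmdef]; exact div_mul_cancel₀ _ (hden z hz)
    have hgz : g z - γ = z * dslope m 0 z * (1 - (starRingEnd ℂ) γ * g z) := by
      rw [← this, hexp]; ring
    linear_combination hgz

end LZaux3

section LZkey
open Complex Metric Topology Filter

/-- The central computation: from the two functional equations of the Schur algorithm,
compute the first three Taylor coefficients of `p`. -/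
private lemma lz_key {p ψ ψ1 : ℂ → ℂ} {γ0 : ℂ}
    (hp : AnalyticOnNhd ℂ p (ball 0 1)) (hψ : AnalyticOnNhd ℂ ψ (ball 0 1))
    (hψ1 : AnalyticOnNhd ℂ ψ1 (ball 0 1))
    (hp0 : p 0 = 1)
    (e1 : ∀ z ∈ ball (0:ℂ) 1, p z = 1 + z * ψ z * (1 + p z))
    (e2 : ∀ z ∈ ball (0:ℂ) 1, ψ z = γ0 + z * ψ1 z * (1 - γ0 * ψ z)) :
    iteratedDeriv 1 p 0 = 2 * γ0 ∧
    iteratedDeriv 2 p 0 / 2 = 2 * (ψ1 0) * (1 - γ0^2) + 2 * γ0^2 ∧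
    iteratedDeriv 3 p 0 / 6 =
      2 * ((1 - γ0^2) * (dslope ψ1 0 0) - γ0 * (ψ1 0) * ((ψ1 0) * (1 - γ0^2)))
        + γ0 * (2 * (ψ1 0) * (1 - γ0^2) + 2 * γ0^2) + ((ψ1 0) * (1 - γ0^2)) * (2 * γ0) := by
  have hmem : (0:ℂ) ∈ ball (0:ℂ) 1 := mem_ball_self one_pos
  set Dp := dslope p 0 with hDpdef
  set Dψ := dslope ψ 0 with hDψdef
  set Dψ1 := dslope ψ1 0 with hDψ1def
  have hDp : AnalyticOnNhd ℂ Dp (ball 0 1) := lz_dslope_analytic hp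
  have hDψ : AnalyticOnNhd ℂ Dψ (ball 0 1) := lz_dslope_analytic hψ
  have hDψ1 : AnalyticOnNhd ℂ Dψ1 (ball 0 1) := lz_dslope_analytic hψ1
  set D2p := dslope Dp 0 with hD2pdef
  set D2ψ := dslope Dψ 0 with hD2ψdef
  have hD2p : AnalyticOnNhd ℂ D2p (ball 0 1) := lz_dslope_analytic hDp
  have hD2ψ : AnalyticOnNhd ℂ D2ψ (ball 0 1) := lz_dslope_analytic hDψ
  set D3p := dslope D2p 0 with hD3pdef
  have hD3p : AnalyticOnNhd ℂ D3p (ball 0 1) := lz_dslope_analytic hD2p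
  have hψ0 : ψ 0 = γ0 := by have := e2 0 hmem; simpa using this
  -- r1 : Dp = ψ (1 + p)
  have r1 : ∀ z ∈ ball (0:ℂ) 1, Dp z = ψ z * (1 + p z) := by
    refine lz_cancel hDp (fun z hz => (hψ z hz).mul (analyticAt_const.add (hp z hz))) ?_
    intro z hz
    have hE := lz_expand p z
    rw [hp0] at hE
    linear_combination (e1 z hz) - hE
  have hDp0 : Dp 0 = 2 * γ0 := by
    have := r1 0 hmem
    rw [hψ0, hp0] at this
    linear_combination this
  -- r2 : Dψ = ψ1 (1 - γ0 ψ)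
  have r2 : ∀ z ∈ ball (0:ℂ) 1, Dψ z = ψ1 z * (1 - γ0 * ψ z) := by
    refine lz_cancel hDψ (fun z hz => (hψ1 z hz).mul
      (analyticAt_const.sub (analyticAt_const.mul (hψ z hz)))) ?_
    intro z hz
    have hE := lz_expand ψ z
    rw [hψ0] at hE
    linear_combination (e2 z hz) - hE
  have hDψ0 : Dψ 0 = ψ1 0 * (1 - γ0^2) := by
    have := r2 0 hmem
    rw [hψ0] at this
    linear_combination this
  -- r3 : D2p = 2 Dψ + γ0 Dp + z Dψ Dp
  have r3 : ∀ z ∈ ball (0:ℂ) 1, D2p z = 2 * Dψ z + γ0 * Dp z + z * (Dψ z * Dp z) := by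
    refine lz_cancel hD2p (fun z hz =>
      ((analyticAt_const.mul (hDψ z hz)).add (analyticAt_const.mul (hDp z hz))).add
        (analyticAt_id.mul ((hDψ z hz).mul (hDp z hz)))) ?_
    intro z hz
    have hE := lz_expand Dp z
    rw [hDp0] at hE
    have h1 := r1 z hz
    have hEψ := lz_expand ψ z
    rw [hψ0] at hEψ
    have hEp := lz_expand p z
    rw [hp0] at hEp
    linear_combination -hE + h1 + (1 + p z) * hEψ + (γ0 + z * Dψ z) * hEp
  have hD2p0 : D2p 0 = 2 * (ψ1 0) * (1 - γ0^2) + 2 * γ0^2 := by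
    have := r3 0 hmem
    rw [hDψ0, hDp0] at this
    linear_combination this
  -- r4 : D2ψ = (1-γ0²) Dψ1 - γ0 x Dψ - γ0 z Dψ1 Dψ
  have r4 : ∀ z ∈ ball (0:ℂ) 1, D2ψ z =
      (1 - γ0^2) * Dψ1 z - γ0 * (ψ1 0) * Dψ z - γ0 * z * (Dψ1 z * Dψ z) := by
    refine lz_cancel hD2ψ (fun z hz =>
      (((analyticAt_const.mul (hDψ1 z hz)).sub (analyticAt_const.mul (hDψ z hz))).sub
        ((analyticAt_const.mul analyticAt_id).mul ((hDψ1 z hz).mul (hDψ z hz))))) ?_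
    intro z hz
    have hE2 := lz_expand Dψ z
    rw [hDψ0] at hE2
    have h2 := r2 z hz
    have hEψ1 := lz_expand ψ1 z
    have hEψ := lz_expand ψ z
    rw [hψ0] at hEψ
    linear_combination -hE2 + h2 + (1 - γ0 * ψ z) * hEψ1 - γ0 * (ψ1 0 + z * Dψ1 z) * hEψ
  have hD2ψ0 : D2ψ 0 = (1 - γ0^2) * (Dψ1 0) - γ0 * (ψ1 0) * (ψ1 0 * (1 - γ0^2)) := by
    have := r4 0 hmem
    rw [hDψ0] at this
    linear_combination this
  -- r5 : D3p = 2 D2ψ + γ0 D2p + Dψ Dp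
  have r5 : ∀ z ∈ ball (0:ℂ) 1, D3p z = 2 * D2ψ z + γ0 * D2p z + Dψ z * Dp z := by
    refine lz_cancel hD3p (fun z hz =>
      ((analyticAt_const.mul (hD2ψ z hz)).add (analyticAt_const.mul (hD2p z hz))).add
        ((hDψ z hz).mul (hDp z hz))) ?_
    intro z hz
    have hE3 := lz_expand Dp z
    have hE3' := lz_expand D2p z
    have h3z := r3 z hz
    have h30 := r3 0 hmem
    have hEDψ := lz_expand Dψ z
    have hEDp := lz_expand Dp z
    linear_combination -hE3' + h3z - h30 + 2 * hEDψ + γ0 * hEDp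
  have hD3p0 : D3p 0 = 2 * D2ψ 0 + γ0 * D2p 0 + Dψ 0 * Dp 0 := r5 0 hmem
  -- bridge to iterated derivatives
  have hb1 : iteratedDeriv 1 p 0 = Dp 0 := by
    rw [lz_coeff_bridge (hp 0 hmem) 1]
    show ((Nat.factorial 1 : ℕ) : ℂ) * Dp 0 = Dp 0
    norm_num [Nat.factorial]
  have hb2 : iteratedDeriv 2 p 0 = 2 * D2p 0 := by
    rw [lz_coeff_bridge (hp 0 hmem) 2]
    show ((Nat.factorial 2 : ℕ) : ℂ) * D2p 0 = 2 * D2p 0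
    norm_num [Nat.factorial]
  have hb3 : iteratedDeriv 3 p 0 = 6 * D3p 0 := by
    rw [lz_coeff_bridge (hp 0 hmem) 3]
    show ((Nat.factorial 3 : ℕ) : ℂ) * D3p 0 = 6 * D3p 0
    norm_num [Nat.factorial]
  refine ⟨by rw [hb1, hDp0], by rw [hb2, hD2p0]; ring, ?_⟩
  rw [hb3, hD3p0, hD2ψ0, hD2p0, hDψ0, hDp0]
  ring

end LZkey

section LZmain
open Complex Metric Topology Filter

private lemma lz_one_add_ne {a : ℂ} (h : ‖a‖ < 1) : 1 + a ≠ 0 := by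
  have := lz_one_sub_ne (a := -a) (by simpa using h)
  simpa [sub_neg_eq_add] using this

private lemma lz_dslope_of_const {f : ℂ → ℂ} (h : ∀ z ∈ ball (0:ℂ) 1, f z = f 0) :
    dslope f 0 0 = 0 := by
  rw [dslope_same]
  have hev : f =ᶠ[𝓝 (0:ℂ)] fun _ => f 0 := by
    filter_upwards [ball_mem_nhds (0:ℂ) one_pos] with w hw using h w hw
  rw [hev.deriv_eq]
  simp

private lemma lz_cayley {w : ℂ} (h : 0 < w.re) :
    ‖(w - 1)‖ < ‖(w + 1)‖ := by
  have key : Complex.normSq (w - 1) < Complex.normSq (w + 1) := by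
    simp only [Complex.normSq_apply, Complex.sub_re, Complex.sub_im, Complex.add_re,
      Complex.add_im, Complex.one_re, Complex.one_im]
    nlinarith
  calc ‖(w - 1)‖ = Real.sqrt (Complex.normSq (w - 1)) := by rw [Complex.norm_def]
    _ < Real.sqrt (Complex.normSq (w + 1)) := Real.sqrt_lt_sqrt (Complex.normSq_nonneg _) key
    _ = ‖(w + 1)‖ := by rw [Complex.norm_def]

private lemma lz_hxx (x : ℂ) : (starRingEnd ℂ) x * x = ((‖x‖ : ℝ) : ℂ)^2 := by
  rw [mul_comm, Complex.mul_conj, ← Complex.sq_norm]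
  push_cast
  ring

/-- Forward direction. -/
private lemma lz_forward (c₁ : ℝ) (c₂ c₃ : ℂ)
    (h : ∃ p : ℂ → ℂ, AnalyticOnNhd ℂ p (ball 0 1) ∧ p 0 = 1 ∧
        (∀ z ∈ ball (0 : ℂ) 1, 0 < (p z).re) ∧
        iteratedDeriv 1 p 0 = (c₁ : ℂ) ∧
        iteratedDeriv 2 p 0 / 2 = c₂ ∧
        iteratedDeriv 3 p 0 / 6 = c₃) :
    ∃ x y : ℂ, ‖x‖ ≤ 1 ∧ ‖y‖ ≤ 1 ∧
        2 * c₂ = (c₁ : ℂ) ^ 2 + (4 - (c₁ : ℂ) ^ 2) * x ∧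
        4 * c₃ = (c₁ : ℂ) ^ 3 + 2 * (4 - (c₁ : ℂ) ^ 2) * (c₁ : ℂ) * x -
            (4 - (c₁ : ℂ) ^ 2) * (c₁ : ℂ) * x ^ 2 +
            2 * (4 - (c₁ : ℂ) ^ 2) * (1 - (‖x‖ : ℂ) ^ 2) * y := by
  obtain ⟨p, hp, hp0, hre, h1, h2, h3⟩ := h
  have hmem : (0:ℂ) ∈ ball (0:ℂ) 1 := mem_ball_self one_pos
  -- the Cayley transform φ of p
  have hq : ∀ z ∈ ball (0:ℂ) 1, p z + 1 ≠ 0 := by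
    intro z hz hc
    have h0 := hre z hz
    have : p z = -1 := by linear_combination hc
    rw [this] at h0
    norm_num at h0
  set φ : ℂ → ℂ := fun z => (p z - 1) / (p z + 1) with hφdef
  have hφ : AnalyticOnNhd ℂ φ (ball 0 1) := fun z hz =>
    ((hp z hz).sub analyticAt_const).div ((hp z hz).add analyticAt_const) (hq z hz)
  have hφ0 : φ 0 = 0 := by simp [hφdef, hp0]
  have hφlt : ∀ z ∈ ball (0:ℂ) 1, ‖(φ z)‖ < 1 := by
    intro z hz
    rw [hφdef]
    simp only
    rw [norm_div, div_lt_one (norm_pos_iff.mpr (hq z hz))]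
    exact lz_cayley (hre z hz)
  -- ψ = φ / z
  set ψ : ℂ → ℂ := dslope φ 0 with hψdef
  have hψan : AnalyticOnNhd ℂ ψ (ball 0 1) := lz_dslope_analytic hφ
  have hψle : ∀ z ∈ ball (0:ℂ) 1, ‖ψ z‖ ≤ 1 := by
    intro z hz
    have := Complex.norm_dslope_le_div_of_mapsTo_ball (c := 0) (R₁ := 1) (R₂ := 1)
      hφ.differentiableOn (fun w hw => by rw [hφ0]; simpa using (hφlt w hw).le) hz
    simpa using this
  have e1 : ∀ z ∈ ball (0:ℂ) 1, p z = 1 + z * ψ z * (1 + p z) := by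
    intro z hz
    have hm : φ z * (p z + 1) = p z - 1 := by
      rw [hφdef]; exact div_mul_cancel₀ _ (hq z hz)
    have hE := lz_expand φ z
    rw [hφ0] at hE
    rw [hE] at hm
    linear_combination -hm
  -- first coefficient
  have r1 : ∀ z ∈ ball (0:ℂ) 1, dslope p 0 z = ψ z * (1 + p z) := by
    refine lz_cancel (lz_dslope_analytic hp)
      (fun z hz => (hψan z hz).mul (analyticAt_const.add (hp z hz))) ?_
    intro z hz
    have hE := lz_expand p z
    rw [hp0] at hE
    linear_combination (e1 z hz) - hE
  have hψ0c : ψ 0 = (c₁ : ℂ) / 2 := by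
    have hr := r1 0 hmem
    rw [hp0] at hr
    have hdd : dslope p 0 0 = deriv p 0 := dslope_same p 0
    have h1' : deriv p 0 = (c₁ : ℂ) := by rw [← h1, iteratedDeriv_one]
    rw [hdd, h1'] at hr
    linear_combination -hr / 2
  have hconj : (starRingEnd ℂ) (ψ 0) = ψ 0 := by
    rw [hψ0c]
    have hcast : ((c₁:ℂ))/2 = ((c₁/2 : ℝ) : ℂ) := by push_cast; ring
    rw [hcast, Complex.conj_ofReal]
  have habsγ0 : ‖ψ 0‖ ≤ 1 := hψle 0 hmem
  rcases lt_or_eq_of_le habsγ0 with hγlt | hγeq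
  · -- |γ0| < 1 : one more Schur step
    obtain ⟨ψ1, hψ1an, hψ1le, e2'⟩ := lz_schur_step hψan (lz_schur_lt hψan hψle hγlt)
    rw [hconj] at e2'
    obtain ⟨k1, k2, k3⟩ := lz_key hp hψan hψ1an hp0 e1 e2'
    have hg : ψ 0 = (c₁ : ℂ) / 2 := hψ0c
    rw [hg] at k2 k3
    set x := ψ1 0 with hxdef
    have habsx : ‖x‖ ≤ 1 := hψ1le 0 hmem
    rcases lt_or_eq_of_le habsx with hxlt | hxeq
    · -- |x| < 1 : final Schur step
      obtain ⟨ψ2, hψ2an, hψ2le, e3⟩ := lz_schur_step hψ1an (lz_schur_lt hψ1an hψ1le hxlt)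
      set y := ψ2 0 with hydef
      have rψ1 : ∀ z ∈ ball (0:ℂ) 1, dslope ψ1 0 z = ψ2 z * (1 - (starRingEnd ℂ) x * ψ1 z) := by
        refine lz_cancel (lz_dslope_analytic hψ1an)
          (fun z hz => (hψ2an z hz).mul
            (analyticAt_const.sub (analyticAt_const.mul (hψ1an z hz)))) ?_
        intro z hz
        have hE := lz_expand ψ1 z
        linear_combination (e3 z hz) - hE
      have hu : dslope ψ1 0 0 = y * (1 - ((‖x‖ : ℝ) : ℂ)^2) := by
        have := rψ1 0 hmem
        rw [← hxdef, lz_hxx x] at this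
        rw [this, ← hydef]
      rw [hu] at k3
      refine ⟨x, y, habsx, hψ2le 0 hmem, ?_, ?_⟩
      · rw [← h2]
        linear_combination 2 * k2
      · rw [← h3]
        linear_combination 4 * k3
    · -- |x| = 1 : ψ1 is constant
      have hconst := lz_maxmod_const hψ1an hψ1le hxeq
      have hu : dslope ψ1 0 0 = 0 := lz_dslope_of_const hconst
      rw [hu] at k3
      refine ⟨x, 0, habsx, by norm_num, ?_, ?_⟩
      · rw [← h2]
        linear_combination 2 * k2
      · rw [← h3]
        linear_combination 4 * k3
  · -- |γ0| = 1 : ψ is constant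
    have hconst := lz_maxmod_const hψan hψle hγeq
    have e2 : ∀ z ∈ ball (0:ℂ) 1, ψ z = ψ 0 + z * (fun _ : ℂ => (0:ℂ)) z * (1 - ψ 0 * ψ z) := by
      intro z hz
      rw [hconst z hz]
      ring
    obtain ⟨k1, k2, k3⟩ := lz_key hp hψan (fun z _ => analyticAt_const) hp0 e1 e2
    rw [hψ0c] at k2 k3
    have hz0 : dslope (fun _ : ℂ => (0:ℂ)) 0 0 = 0 := lz_dslope_of_const (by simp)
    rw [hz0] at k3
    -- here |c₁| = 2, so 4 - c₁² = 0 ; but in fact the identities hold with x = y = 0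
    have habs1 : ‖((c₁:ℂ)/2)‖ = 1 := by rw [← hψ0c]; exact hγeq
    have hrabs : |c₁/2| = 1 := by
      rw [← Real.norm_eq_abs, ← Complex.norm_real]
      push_cast
      exact habs1
    have hr1 : (c₁/2)^2 = 1 := by rw [← _root_.sq_abs, hrabs]; norm_num
    have hr2 : c₁^2 = 4 := by nlinarith [hr1]
    have hc1sq : (c₁:ℂ)^2 = 4 := by exact_mod_cast hr2
    refine ⟨0, 0, by norm_num, by norm_num, ?_, ?_⟩
    · rw [← h2]
      linear_combination 2 * k2
    · rw [← h3]
      linear_combination 4 * k3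

end LZmain

section LZback
open Complex Metric Topology Filter

private lemma lz_backward (c₁ : ℝ) (hc₁ : -2 ≤ c₁ ∧ c₁ ≤ 2) (c₂ c₃ : ℂ)
    (h : ∃ x y : ℂ, ‖x‖ ≤ 1 ∧ ‖y‖ ≤ 1 ∧
        2 * c₂ = (c₁ : ℂ) ^ 2 + (4 - (c₁ : ℂ) ^ 2) * x ∧
        4 * c₃ = (c₁ : ℂ) ^ 3 + 2 * (4 - (c₁ : ℂ) ^ 2) * (c₁ : ℂ) * x -
            (4 - (c₁ : ℂ) ^ 2) * (c₁ : ℂ) * x ^ 2 +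
            2 * (4 - (c₁ : ℂ) ^ 2) * (1 - (‖x‖ : ℂ) ^ 2) * y) :
    ∃ p : ℂ → ℂ, AnalyticOnNhd ℂ p (ball 0 1) ∧ p 0 = 1 ∧
        (∀ z ∈ ball (0 : ℂ) 1, 0 < (p z).re) ∧
        iteratedDeriv 1 p 0 = (c₁ : ℂ) ∧
        iteratedDeriv 2 p 0 / 2 = c₂ ∧
        iteratedDeriv 3 p 0 / 6 = c₃ := by
  obtain ⟨x, y, hx, hy, h2, h3⟩ := h
  have hmem : (0:ℂ) ∈ ball (0:ℂ) 1 := mem_ball_self one_pos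
  set g : ℂ := (c₁ : ℂ) / 2 with hgdef
  have hgcast : g = ((c₁/2 : ℝ) : ℂ) := by rw [hgdef]; push_cast; ring
  have hconjg : (starRingEnd ℂ) g = g := by rw [hgcast, Complex.conj_ofReal]
  have habsg : ‖g‖ ≤ 1 := by
    rw [hgcast, Complex.norm_real, Real.norm_eq_abs]
    rw [abs_le]
    constructor <;> [linarith [hc₁.1]; linarith [hc₁.2]]
  have hball : ∀ z ∈ ball (0:ℂ) 1, ‖z‖ < 1 := by
    intro z hz
    rw [mem_ball_zero_iff] at hz
    simpa using hz
  -- the nested Möbius construction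
  set ψ1 : ℂ → ℂ := fun z => (x + z * y) / (1 + (starRingEnd ℂ) x * (z * y)) with hψ1def
  have hzy : ∀ z ∈ ball (0:ℂ) 1, ‖(z * y)‖ < 1 := by
    intro z hz
    rw [norm_mul]
    nlinarith [hball z hz, norm_nonneg z, norm_nonneg y]
  have hd1 : ∀ z ∈ ball (0:ℂ) 1, 1 + (starRingEnd ℂ) x * (z * y) ≠ 0 := by
    intro z hz
    apply lz_one_add_ne
    rw [norm_mul, Complex.norm_conj]
    nlinarith [hzy z hz, norm_nonneg x, norm_nonneg (z*y)]
  have hψ1an : AnalyticOnNhd ℂ ψ1 (ball 0 1) := by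
    intro z hz
    exact (analyticAt_const.add (analyticAt_id.mul analyticAt_const)).div
      (analyticAt_const.add (analyticAt_const.mul (analyticAt_id.mul analyticAt_const)))
      (hd1 z hz)
  have hψ1le : ∀ z ∈ ball (0:ℂ) 1, ‖ψ1 z‖ ≤ 1 := fun z hz =>
    lz_mobius_le hx (hzy z hz)
  have hψ10 : ψ1 0 = x := by rw [hψ1def]; simp
  have hzψ1 : ∀ z ∈ ball (0:ℂ) 1, ‖(z * ψ1 z)‖ < 1 := by
    intro z hz
    rw [norm_mul]
    nlinarith [hball z hz, norm_nonneg z, norm_nonneg (ψ1 z), hψ1le z hz]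
  have hd2 : ∀ z ∈ ball (0:ℂ) 1, 1 + g * (z * ψ1 z) ≠ 0 := by
    intro z hz
    apply lz_one_add_ne
    rw [norm_mul]
    nlinarith [hzψ1 z hz, norm_nonneg g, norm_nonneg (z * ψ1 z), habsg]
  set ψ : ℂ → ℂ := fun z => (g + z * ψ1 z) / (1 + g * (z * ψ1 z)) with hψdef
  have hψan : AnalyticOnNhd ℂ ψ (ball 0 1) := by
    intro z hz
    exact (analyticAt_const.add (analyticAt_id.mul (hψ1an z hz))).div
      (analyticAt_const.add (analyticAt_const.mul (analyticAt_id.mul (hψ1an z hz))))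
      (hd2 z hz)
  have hψle : ∀ z ∈ ball (0:ℂ) 1, ‖ψ z‖ ≤ 1 := by
    intro z hz
    have := lz_mobius_le habsg (hzψ1 z hz)
    rw [hconjg] at this
    exact this
  have hzψ : ∀ z ∈ ball (0:ℂ) 1, ‖(z * ψ z)‖ < 1 := by
    intro z hz
    rw [norm_mul]
    nlinarith [hball z hz, norm_nonneg z, norm_nonneg (ψ z), hψle z hz]
  have hd3 : ∀ z ∈ ball (0:ℂ) 1, 1 - z * ψ z ≠ 0 := fun z hz => lz_one_sub_ne (hzψ z hz)
  set p : ℂ → ℂ := fun z => (1 + z * ψ z) / (1 - z * ψ z) with hpdef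
  have hpan : AnalyticOnNhd ℂ p (ball 0 1) := by
    intro z hz
    exact (analyticAt_const.add (analyticAt_id.mul (hψan z hz))).div
      (analyticAt_const.sub (analyticAt_id.mul (hψan z hz))) (hd3 z hz)
  have hp0 : p 0 = 1 := by rw [hpdef]; simp
  have hre : ∀ z ∈ ball (0:ℂ) 1, 0 < (p z).re := by
    intro z hz
    rw [hpdef]
    simp only
    rw [Complex.div_re, ← add_div]
    apply div_pos
    · have hw := lz_normSq_lt_one (hzψ z hz)
      simp only [Complex.add_re, Complex.sub_re, Complex.add_im, Complex.sub_im,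
        Complex.one_re, Complex.one_im, Complex.normSq_apply] at hw ⊢
      nlinarith
    · exact Complex.normSq_pos.mpr (hd3 z hz)
  -- functional equations
  have hm1 : ∀ z ∈ ball (0:ℂ) 1, p z * (1 - z * ψ z) = 1 + z * ψ z := by
    intro z hz
    rw [hpdef]; exact div_mul_cancel₀ _ (hd3 z hz)
  have hm2 : ∀ z ∈ ball (0:ℂ) 1, ψ z * (1 + g * (z * ψ1 z)) = g + z * ψ1 z := by
    intro z hz
    rw [hψdef]; exact div_mul_cancel₀ _ (hd2 z hz)
  have hm3 : ∀ z ∈ ball (0:ℂ) 1, ψ1 z * (1 + (starRingEnd ℂ) x * (z * y)) = x + z * y := by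
    intro z hz
    rw [hψ1def]; exact div_mul_cancel₀ _ (hd1 z hz)
  clear_value p ψ ψ1 g
  have e1 : ∀ z ∈ ball (0:ℂ) 1, p z = 1 + z * ψ z * (1 + p z) := by
    intro z hz
    linear_combination hm1 z hz
  have e2 : ∀ z ∈ ball (0:ℂ) 1, ψ z = g + z * ψ1 z * (1 - g * ψ z) := by
    intro z hz
    linear_combination hm2 z hz
  have e3 : ∀ z ∈ ball (0:ℂ) 1, ψ1 z = x + z * y * (1 - (starRingEnd ℂ) x * ψ1 z) := by
    intro z hz
    linear_combination hm3 z hz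
  obtain ⟨k1, k2, k3⟩ := lz_key hpan hψan hψ1an hp0 e1 e2
  -- value of dslope ψ1 0 0
  have rψ1 : ∀ z ∈ ball (0:ℂ) 1, dslope ψ1 0 z = y * (1 - (starRingEnd ℂ) x * ψ1 z) := by
    refine lz_cancel (lz_dslope_analytic hψ1an)
      (fun z hz => analyticAt_const.mul
        (analyticAt_const.sub (analyticAt_const.mul (hψ1an z hz)))) ?_
    intro z hz
    have hE := lz_expand ψ1 z
    rw [hψ10] at hE
    linear_combination (e3 z hz) - hE
  have hu : dslope ψ1 0 0 = y * (1 - ((‖x‖ : ℝ) : ℂ)^2) := by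
    have := rψ1 0 hmem
    rw [hψ10, lz_hxx x] at this
    exact this
  rw [hψ10] at k2 k3
  rw [hu] at k3
  rw [hgdef] at k1 k2 k3
  refine ⟨p, hpan, hp0, hre, ?_, ?_, ?_⟩
  · rw [k1]; ring
  · rw [k2]; linear_combination -h2 / 2
  · rw [k3]; linear_combination -h3 / 4

end LZback

/-- Libera–Złotkiewicz: Let `-2 ≤ c₁ ≤ 2` be real and `c₂, c₃ ∈ ℂ`.
There exists a Carathéodory function `p ∈ 𝒫` whose Taylor expansion
`p(z) = 1 + c₁ z + c₂ z² + c₃ z³ + ⋯` has these first three coefficients if and only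
if there exist `x, y ∈ ℂ`, `|x| ≤ 1`, `|y| ≤ 1`, with `2c₂ = c₁² + (4 - c₁²)x` and
`4c₃ = c₁³ + 2(4 - c₁²)c₁x - (4 - c₁²)c₁x² + 2(4 - c₁²)(1 - |x|²)y`.
Here the `n`-th Taylor coefficient of `p` is `iteratedDeriv n p 0 / n!`. -/
theorem stmt_13 (c₁ : ℝ) (hc₁ : -2 ≤ c₁ ∧ c₁ ≤ 2) (c₂ c₃ : ℂ) :
    (∃ p : ℂ → ℂ, AnalyticOnNhd ℂ p (ball 0 1) ∧ p 0 = 1 ∧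
        (∀ z ∈ ball (0 : ℂ) 1, 0 < (p z).re) ∧
        iteratedDeriv 1 p 0 = (c₁ : ℂ) ∧
        iteratedDeriv 2 p 0 / 2 = c₂ ∧
        iteratedDeriv 3 p 0 / 6 = c₃) ↔
      ∃ x y : ℂ, ‖x‖ ≤ 1 ∧ ‖y‖ ≤ 1 ∧
        2 * c₂ = (c₁ : ℂ) ^ 2 + (4 - (c₁ : ℂ) ^ 2) * x ∧
        4 * c₃ = (c₁ : ℂ) ^ 3 + 2 * (4 - (c₁ : ℂ) ^ 2) * (c₁ : ℂ) * x -
            (4 - (c₁ : ℂ) ^ 2) * (c₁ : ℂ) * x ^ 2 +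
            2 * (4 - (c₁ : ℂ) ^ 2) * (1 - (‖x‖ : ℂ) ^ 2) * y := by
  constructor
  · exact lz_forward c₁ c₂ c₃
  · exact lz_backward c₁ hc₁ c₂ c₃
end

section
/- Let -π/2 < γ < π/2, 0 ≤ α < 1, and μ = e^{iγ} cos γ. The function k_{γ,α}(z) = z/(1 - z)^{2(1-α)μ} (with the principal branch of the power, equal to z at z = 0) belongs to S_γ(α), and its Taylor coefficients satisfy a₂ = 2(1-α)μ, so |a₂| = 2(1-α)cos γ. -/
open Complex Metric Real

/-- For `-π/2 < γ < π/2`, `0 ≤ α < 1`, `μ = e^{iγ} cos γ`, the Koebe-type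
function `k_{γ,α}(z) = z/(1 - z)^{2(1-α)μ} = z · exp(-2(1-α)μ Log(1 - z))` belongs to
`S_γ(α)` and has `a₂ = 2(1-α)μ`, hence `|a₂| = 2(1-α) cos γ`. -/
theorem stmt_14 (γ α : ℝ) (hγ₁ : -(π / 2) < γ) (hγ₂ : γ < π / 2)
    (hα₁ : 0 ≤ α) (hα₂ : α < 1) (μ : ℂ) (hμ : μ = Complex.exp (↑γ * Complex.I) * Real.cos γ)
    (k : ℂ → ℂ)
    (hk : ∀ z : ℂ, k z = z * Complex.exp (-(2 * (1 - α : ℂ) * μ) * Complex.log (1 - z))) :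
    AnalyticOnNhd ℂ k (ball 0 1) ∧ k 0 = 0 ∧ deriv k 0 = 1 ∧
      (∀ z ∈ ball (0 : ℂ) 1, z ≠ 0 → k z ≠ 0) ∧
      (∀ z ∈ ball (0 : ℂ) 1, z ≠ 0 →
        α * Real.cos γ < (Complex.exp (-(↑γ * Complex.I)) * (z * deriv k z / k z)).re) ∧
      iteratedDeriv 2 k 0 / 2 = 2 * (1 - α : ℂ) * μ ∧
      ‖iteratedDeriv 2 k 0 / 2‖ = 2 * (1 - α) * Real.cos γ := by
  have hcos : 0 < Real.cos γ := Real.cos_pos_of_mem_Ioo ⟨hγ₁, hγ₂⟩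
  set w : ℂ := 2 * (1 - α : ℂ) * μ with hwdef
  set g : ℂ → ℂ := fun z => Complex.exp (-w * Complex.log (1 - z)) with hgdef
  have hkg : ∀ z, k z = z * g z := hk
  have hkfun : k = fun z => z * g z := funext hkg
  subst hkfun
  -- slit plane facts
  have hslit : ∀ z ∈ ball (0 : ℂ) 1, (1 - z) ∈ Complex.slitPlane := by
    intro z hz
    rw [mem_ball, dist_zero_right] at hz
    refine Or.inl ?_
    have := Complex.abs_re_le_norm z
    simp only [Complex.sub_re, Complex.one_re]
    have : z.re < 1 := lt_of_le_of_lt (le_trans (le_abs_self _) this) hz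
    linarith
  have hne : ∀ z ∈ ball (0 : ℂ) 1, (1 : ℂ) - z ≠ 0 := by
    intro z hz h
    have := hslit z hz
    rw [h] at this
    simpa [Complex.slitPlane] using this
  have hgne : ∀ z : ℂ, g z ≠ 0 := fun z => Complex.exp_ne_zero _
  -- general derivative of g
  have hgderiv : ∀ z : ℂ, z ∈ ball (0 : ℂ) 1 →
      HasDerivAt g (g z * (w * (1 - z)⁻¹)) z := by
    intro z hz
    have h1 : HasDerivAt (fun z : ℂ => 1 - z) (-1) z := (hasDerivAt_id z).const_sub 1
    have h2 : HasDerivAt (fun z : ℂ => Complex.log (1 - z)) ((1 - z)⁻¹ * -1) z :=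
      (Complex.hasDerivAt_log (hslit z hz)).comp z h1
    have h3 := (h2.const_mul (-w)).cexp
    have he : Complex.exp (-w * Complex.log (1 - z)) * (-w * ((1 - z)⁻¹ * -1))
        = g z * (w * (1 - z)⁻¹) := by rw [hgdef]; ring
    rwa [he] at h3
  have hkderiv : ∀ z : ℂ, z ∈ ball (0 : ℂ) 1 →
      HasDerivAt (fun z => z * g z) (g z + z * (g z * (w * (1 - z)⁻¹))) z := by
    intro z hz
    have := (hasDerivAt_id' z).mul (hgderiv z hz)
    exact this.congr_deriv (by ring)
  have hg0 : g 0 = 1 := by simp [hgdef]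
  have h0mem : (0 : ℂ) ∈ ball (0 : ℂ) 1 := by simp
  -- analyticity
  have hana : AnalyticOnNhd ℂ (fun z => z * g z) (ball 0 1) := by
    intro z hz
    exact (analyticAt_id).mul
      ((analyticAt_const.mul ((analyticAt_const.sub analyticAt_id).clog (hslit z hz))).cexp)
  -- deriv at 0
  have hd0 : deriv (fun z => z * g z) 0 = 1 := by
    have := (hkderiv 0 h0mem).deriv
    simpa [hg0] using this
  -- second derivative
  have hD : deriv (fun z => z * g z) =ᶠ[nhds (0 : ℂ)]
      fun z => g z + z * (g z * (w * (1 - z)⁻¹)) := by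
    filter_upwards [isOpen_ball.mem_nhds h0mem] with z hz using (hkderiv z hz).deriv
  have hinv0 : HasDerivAt (fun z : ℂ => (1 - z)⁻¹) 1 0 := by
    have h1 : HasDerivAt (fun z : ℂ => 1 - z) (-1) 0 := (hasDerivAt_id 0).const_sub 1
    have := h1.inv (by norm_num : (1 : ℂ) - 0 ≠ 0)
    exact this.congr_deriv (by norm_num)
  have hg0' : HasDerivAt g (g 0 * (w * (1 - 0)⁻¹)) 0 := hgderiv 0 h0mem
  have hD0 : HasDerivAt (fun z => g z + z * (g z * (w * (1 - z)⁻¹)))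
      ((g 0 * (w * (1-0)⁻¹)) + (1 * (g 0 * (w * (1-0)⁻¹)) +
        0 * ((g 0 * (w * (1-0)⁻¹)) * (w * (1-0)⁻¹) + g 0 * (w * 1)))) 0 := by
    exact hg0'.add ((hasDerivAt_id 0).mul (hg0'.mul (hinv0.const_mul w)))
  have hit2 : iteratedDeriv 2 (fun z => z * g z) 0 = 2 * w := by
    rw [show (2 : ℕ) = 1 + 1 from rfl, iteratedDeriv_succ, iteratedDeriv_one]
    rw [hD.deriv_eq, hD0.deriv]
    simp [hg0]
    ring
  refine ⟨hana, by simp, hd0, ?_, ?_, ?_, ?_⟩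
  · intro z hz hz0
    exact mul_ne_zero hz0 (hgne z)
  · -- the Re inequality
    intro z hz hz0
    have hdz := (hkderiv z hz).deriv
    have hq : z * deriv (fun z => z * g z) z / ((fun z => z * g z) z) = 1 + w * z / (1 - z) := by
      rw [hdz]
      simp only
      rw [div_eq_iff (mul_ne_zero hz0 (hgne z))]
      field_simp [hne z hz]
    rw [hq]
    have hee : Complex.exp (-(↑γ * Complex.I)) * Complex.exp (↑γ * Complex.I) = 1 := by
      rw [← Complex.exp_add]; simp
    have hsplit : Complex.exp (-(↑γ * Complex.I)) * (1 + w * z / (1 - z)) =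
        Complex.exp (-(↑γ * Complex.I)) + ((2 * (1 - α) * Real.cos γ : ℝ) : ℂ) * (z / (1 - z)) := by
      rw [hwdef, hμ,
        show ((2 * (1 - α) * Real.cos γ : ℝ) : ℂ) = 2 * (1 - (α:ℂ)) * (Real.cos γ : ℂ) by
          push_cast; ring]
      linear_combination (2 * (1 - (α:ℂ)) * (Real.cos γ : ℂ) * z / (1 - z)) * hee
    rw [hsplit, Complex.add_re, Complex.re_ofReal_mul]
    have hre1 : (Complex.exp (-(↑γ * Complex.I))).re = Real.cos γ := by
      rw [show (-(↑γ * Complex.I) : ℂ) = ((-γ : ℝ) : ℂ) * Complex.I by push_cast; ring,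
        Complex.exp_ofReal_mul_I_re, Real.cos_neg]
    rw [hre1]
    -- Re(z/(1-z)) > -1/2
    have hnz : z.re ^ 2 + z.im ^ 2 < 1 := by
      rw [mem_ball, dist_zero_right] at hz
      nlinarith [Complex.sq_norm z, Complex.normSq_apply z, norm_nonneg z]
    have hNpos : 0 < Complex.normSq (1 - z) := Complex.normSq_pos.mpr (hne z hz)
    have ht : -(1/2 : ℝ) < (z / (1 - z)).re := by
      rw [Complex.div_re]
      have hN : Complex.normSq (1 - z) = (1 - z.re)^2 + z.im^2 := by
        rw [Complex.normSq_apply]; simp; ring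
      rw [← add_div, lt_div_iff₀ hNpos]
      simp only [Complex.sub_re, Complex.sub_im, Complex.one_re, Complex.one_im]
      nlinarith [hnz, hN]
    nlinarith [ht, hcos, mul_pos (mul_pos (by linarith : (0:ℝ) < 2) (by linarith : (0:ℝ) < 1 - α)) hcos]
  · rw [hit2]; rw [hwdef]; ring
  · rw [hit2]
    have hw2 : 2 * w / 2 = w := by ring
    rw [hw2, hwdef, hμ, show (1 - (α:ℂ)) = ((1 - α : ℝ) : ℂ) by push_cast; ring]
    rw [norm_mul, norm_mul, norm_mul, Complex.norm_exp_ofReal_mul_I, Complex.norm_real,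
      Real.norm_eq_abs, Complex.norm_real, Real.norm_eq_abs, Complex.norm_two,
      _root_.abs_of_nonneg hcos.le, _root_.abs_of_nonneg (by linarith : (0:ℝ) ≤ 1 - α)]
    ring
end

section
/- Let -π/2 < γ < π/2, 0 ≤ α < 1, and μ = e^{iγ} cos γ. The function h_{γ,α}(z) = z/(1 - z²)^{(1-α)μ} (with the principal branch of the power) belongs to S_γ(α), and its Taylor coefficients satisfy a₂ = 0 and a₃ = (1-α)μ, so |a₃| - |a₂| = (1-α)cos γ. -/
open Complex Metric Real

noncomputable def Gf (c : ℂ) (z : ℂ) : ℂ := Complex.exp (-c * Complex.log (1 - z ^ 2))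

lemma ball_ne {z : ℂ} (hz : z ∈ ball (0:ℂ) 1) :
    (1 - z ^ 2) ∈ Complex.slitPlane ∧ 1 - z ^ 2 ≠ 0 := by
  have h1 : ‖z‖ < 1 := by rw [mem_ball, Complex.dist_eq] at hz; simpa using hz
  have h2 : (z ^ 2).re < 1 := by
    calc (z ^ 2).re ≤ ‖z ^ 2‖ := Complex.re_le_norm _
    _ < 1 := by rw [norm_pow]; exact pow_lt_one₀ (norm_nonneg z) h1 (by norm_num)
  have hsp : (1 - z ^ 2) ∈ Complex.slitPlane := by
    rw [Complex.mem_slitPlane_iff]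
    left
    simp only [Complex.sub_re, Complex.one_re]
    linarith
  exact ⟨hsp, Complex.slitPlane_ne_zero hsp⟩

lemma hasDerivAt_Gf (c : ℂ) {z : ℂ} (hz : z ∈ ball (0:ℂ) 1) :
    HasDerivAt (Gf c) (Gf c z * (2 * c * z / (1 - z ^ 2))) z := by
  obtain ⟨hsp, hne⟩ := ball_ne hz
  have h1 : HasDerivAt (fun z : ℂ => 1 - z ^ 2) (-(2 * z)) z := by
    simpa using ((hasDerivAt_pow 2 z).const_sub 1)
  have h2 : HasDerivAt Complex.log (1 - z ^ 2)⁻¹ (1 - z ^ 2) := Complex.hasDerivAt_log hsp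
  have h4 := (((h2.comp z h1).const_mul (-c)).cexp)
  refine h4.congr_deriv (Eq.symm ?_)
  show Gf c z * (2 * c * z / (1 - z ^ 2)) = Complex.exp (-c * Complex.log (1 - z^2)) * (-c * ((1 - z ^ 2)⁻¹ * -(2 * z)))
  rw [show (Gf c z) = Complex.exp (-c * Complex.log (1 - z^2)) from rfl]
  field_simp

lemma hasDerivAt_H (c : ℂ) {z : ℂ} (hz : z ∈ ball (0:ℂ) 1) :
    HasDerivAt (fun z => z * Gf c z) (Gf c z * (1 + 2 * c * z ^ 2 / (1 - z ^ 2))) z := by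
  obtain ⟨hsp, hne⟩ := ball_ne hz
  have := (hasDerivAt_id' z).mul (hasDerivAt_Gf c hz)
  refine this.congr_deriv ?_
  field_simp

lemma hasDerivAt_F1 (c : ℂ) {z : ℂ} (hz : z ∈ ball (0:ℂ) 1) :
    HasDerivAt (fun z => Gf c z * (1 + 2 * c * z ^ 2 / (1 - z ^ 2)))
      (Gf c z * (2 * c * z / (1 - z ^ 2) * (1 + 2 * c * z ^ 2 / (1 - z ^ 2))
        + 4 * c * z / (1 - z ^ 2) ^ 2)) z := by
  obtain ⟨hsp, hne⟩ := ball_ne hz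
  have hden : HasDerivAt (fun z : ℂ => 1 - z ^ 2) (-(2 * z)) z := by
    simpa using ((hasDerivAt_pow 2 z).const_sub 1)
  have hnum : HasDerivAt (fun z : ℂ => 2 * c * z ^ 2) (2 * c * (2 * z)) z := by
    simpa using ((hasDerivAt_pow 2 z).const_mul (2 * c))
  have hu : HasDerivAt (fun z : ℂ => 1 + 2 * c * z ^ 2 / (1 - z ^ 2))
      ((2 * c * (2 * z) * (1 - z ^ 2) - 2 * c * z ^ 2 * -(2 * z)) / (1 - z ^ 2) ^ 2) z :=
    (hnum.div hden hne).const_add 1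
  have := (hasDerivAt_Gf c hz).mul hu
  refine this.congr_deriv ?_
  field_simp
  ring

lemma hasDerivAt_F2 (c : ℂ) :
    HasDerivAt (fun z => Gf c z * (2 * c * z / (1 - z ^ 2) * (1 + 2 * c * z ^ 2 / (1 - z ^ 2))
        + 4 * c * z / (1 - z ^ 2) ^ 2)) (6 * c) 0 := by
  have h0 : (0:ℂ) ∈ ball (0:ℂ) 1 := by simp
  have hden : HasDerivAt (fun z : ℂ => 1 - z ^ 2) 0 (0:ℂ) := by
    simpa using ((hasDerivAt_pow 2 (0:ℂ)).const_sub 1)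
  have hden2 : HasDerivAt (fun z : ℂ => (1 - z ^ 2) ^ 2) 0 (0:ℂ) := by
    simpa using hden.fun_pow 2
  have hne : (1 : ℂ) - 0 ^ 2 ≠ 0 := by norm_num
  have hne2 : ((1 : ℂ) - 0 ^ 2) ^ 2 ≠ 0 := by norm_num
  have t1 : HasDerivAt (fun z : ℂ => 2 * c * z / (1 - z ^ 2))
      ((2 * c * 1 * (1 - 0 ^ 2) - 2 * c * 0 * 0) / (1 - (0:ℂ) ^ 2) ^ 2) 0 :=
    (((hasDerivAt_id (0:ℂ)).const_mul (2 * c)).div hden hne)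
  have hnum : HasDerivAt (fun z : ℂ => 2 * c * z ^ 2) 0 (0:ℂ) := by
    simpa using ((hasDerivAt_pow 2 (0:ℂ)).const_mul (2 * c))
  have t2 : HasDerivAt (fun z : ℂ => 1 + 2 * c * z ^ 2 / (1 - z ^ 2))
      ((0 * (1 - (0:ℂ) ^ 2) - 2 * c * 0 ^ 2 * 0) / (1 - (0:ℂ) ^ 2) ^ 2) 0 :=
    (hnum.div hden hne).const_add 1
  have t3 : HasDerivAt (fun z : ℂ => 4 * c * z / (1 - z ^ 2) ^ 2)
      ((4 * c * 1 * ((1 - (0:ℂ) ^ 2) ^ 2) - 4 * c * 0 * 0) / ((1 - (0:ℂ) ^ 2) ^ 2) ^ 2) 0 :=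
    (((hasDerivAt_id (0:ℂ)).const_mul (4 * c)).div hden2 hne2)
  have := (hasDerivAt_Gf c h0).mul ((t1.mul t2).add t3)
  refine this.congr_deriv ?_
  have hG0 : Gf c 0 = 1 := by simp [Gf]
  rw [hG0]
  norm_num
  ring

lemma re_key {u : ℂ} (hu : ‖u‖ < 1) : -(1/2 : ℝ) < (u / (1 - u)).re := by
  have hn : Complex.normSq u < 1 := by
    rw [← Complex.sq_norm]; nlinarith [norm_nonneg u]
  have hab : u.re ^ 2 + u.im ^ 2 < 1 := by
    simpa [Complex.normSq_apply, sq] using hn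
  rw [Complex.div_re]
  have hd : 0 < Complex.normSq (1 - u) := by
    rw [Complex.normSq_pos]
    intro hc
    have : u = 1 := by linear_combination -hc
    rw [this] at hab; norm_num at hab
  have h1 : Complex.normSq (1 - u) = (1 - u.re) ^ 2 + u.im ^ 2 := by
    simp [Complex.normSq_apply, sq]; try ring
  rw [← add_div, lt_div_iff₀ hd, h1]
  simp only [Complex.sub_re, Complex.sub_im, Complex.one_re, Complex.one_im]
  nlinarith [hab]

/-- For `-π/2 < γ < π/2`, `0 ≤ α < 1`, `μ = e^{iγ} cos γ`, the function
`h_{γ,α}(z) = z/(1 - z²)^{(1-α)μ} = z · exp(-(1-α)μ Log(1 - z²))` belongs to `S_γ(α)`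
and has `a₂ = 0`, `a₃ = (1-α)μ`, hence `|a₃| - |a₂| = (1-α) cos γ`. -/
theorem stmt_15 (γ α : ℝ) (hγ₁ : -(π / 2) < γ) (hγ₂ : γ < π / 2)
    (hα₁ : 0 ≤ α) (hα₂ : α < 1) (μ : ℂ) (hμ : μ = Complex.exp (↑γ * Complex.I) * Real.cos γ)
    (h : ℂ → ℂ)
    (hh : ∀ z : ℂ, h z = z * Complex.exp (-((1 - α : ℂ) * μ) * Complex.log (1 - z ^ 2))) :
    AnalyticOnNhd ℂ h (ball 0 1) ∧ h 0 = 0 ∧ deriv h 0 = 1 ∧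
      (∀ z ∈ ball (0 : ℂ) 1, z ≠ 0 → h z ≠ 0) ∧
      (∀ z ∈ ball (0 : ℂ) 1, z ≠ 0 →
        α * Real.cos γ < (Complex.exp (-(↑γ * Complex.I)) * (z * deriv h z / h z)).re) ∧
      iteratedDeriv 2 h 0 / 2 = 0 ∧
      iteratedDeriv 3 h 0 / 6 = (1 - α : ℂ) * μ ∧
      ‖iteratedDeriv 3 h 0 / 6‖ - ‖iteratedDeriv 2 h 0 / 2‖ =
        (1 - α) * Real.cos γ := by
  set c : ℂ := (1 - α : ℂ) * μ with hc
  have hh' : h = fun z => z * Gf c z := funext fun z => hh z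
  subst hh'
  have hcos : 0 < Real.cos γ := Real.cos_pos_of_mem_Ioo ⟨hγ₁, hγ₂⟩
  have h0 : (0:ℂ) ∈ ball (0:ℂ) 1 := by simp
  have hG0 : Gf c 0 = 1 := by simp [Gf]
  -- eventual equalities
  have hball : ball (0:ℂ) 1 ∈ nhds (0:ℂ) := isOpen_ball.mem_nhds h0
  have e1 : ∀ z ∈ ball (0:ℂ) 1, deriv (fun z => z * Gf c z) z
      = Gf c z * (1 + 2 * c * z ^ 2 / (1 - z ^ 2)) := fun z hz => (hasDerivAt_H c hz).deriv
  have e2 : ∀ z ∈ ball (0:ℂ) 1, deriv (deriv (fun z => z * Gf c z)) z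
      = Gf c z * (2 * c * z / (1 - z ^ 2) * (1 + 2 * c * z ^ 2 / (1 - z ^ 2))
        + 4 * c * z / (1 - z ^ 2) ^ 2) := by
    intro z hz
    have hmem : ball (0:ℂ) 1 ∈ nhds z := isOpen_ball.mem_nhds hz
    have heq : deriv (fun z => z * Gf c z) =ᶠ[nhds z]
        (fun z => Gf c z * (1 + 2 * c * z ^ 2 / (1 - z ^ 2))) :=
      Filter.eventuallyEq_of_mem hmem e1
    rw [heq.deriv_eq]
    exact (hasDerivAt_F1 c hz).deriv
  have hd2 : iteratedDeriv 2 (fun z => z * Gf c z) 0 = 0 := by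
    rw [iteratedDeriv_succ, iteratedDeriv_one]
    rw [e2 0 h0]
    norm_num
  have hd3 : iteratedDeriv 3 (fun z => z * Gf c z) 0 = 6 * c := by
    rw [iteratedDeriv_succ, iteratedDeriv_succ, iteratedDeriv_one]
    have heq : deriv (deriv (fun z => z * Gf c z)) =ᶠ[nhds 0]
        (fun z => Gf c z * (2 * c * z / (1 - z ^ 2) * (1 + 2 * c * z ^ 2 / (1 - z ^ 2))
          + 4 * c * z / (1 - z ^ 2) ^ 2)) := Filter.eventuallyEq_of_mem hball e2
    rw [heq.deriv_eq]
    exact (hasDerivAt_F2 c).deriv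
  refine ⟨?_, by simp, ?_, ?_, ?_, ?_, ?_, ?_⟩
  · -- analytic
    intro z hz
    obtain ⟨hsp, hne⟩ := ball_ne hz
    have hq : AnalyticAt ℂ (fun z : ℂ => 1 - z ^ 2) z := by
      exact analyticAt_const.sub ((analyticAt_id).pow 2)
    have hlog : AnalyticAt ℂ (fun z : ℂ => Complex.log (1 - z ^ 2)) z := hq.clog hsp
    exact analyticAt_id.mul ((analyticAt_const.mul hlog).cexp)
  · rw [e1 0 h0, hG0]; norm_num
  · intro z hz hz0
    exact mul_ne_zero hz0 (Complex.exp_ne_zero _)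
  · intro z hz hz0
    obtain ⟨hsp, hne⟩ := ball_ne hz
    have hGne : Gf c z ≠ 0 := Complex.exp_ne_zero _
    rw [e1 z hz]
    have hq : z * (Gf c z * (1 + 2 * c * z ^ 2 / (1 - z ^ 2))) / (z * Gf c z)
        = 1 + 2 * c * z ^ 2 / (1 - z ^ 2) := by
      field_simp
    rw [hq]
    have hEE : Complex.exp (-(↑γ * Complex.I)) * Complex.exp (↑γ * Complex.I) = 1 := by
      rw [← Complex.exp_add]; simp
    have key : Complex.exp (-(↑γ * Complex.I)) * (1 + 2 * c * z ^ 2 / (1 - z ^ 2))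
        = Complex.exp (-(↑γ * Complex.I))
          + ((2 * (1 - α) * Real.cos γ : ℝ) : ℂ) * (z ^ 2 / (1 - z ^ 2)) := by
      rw [hc, hμ]
      push_cast
      linear_combination (2 * (1 - (α:ℂ)) * Complex.cos (γ:ℂ) * z ^ 2 / (1 - z ^ 2)) * hEE
    rw [key]
    have hre : (Complex.exp (-(↑γ * Complex.I))).re = Real.cos γ := by
      have : -(↑γ * Complex.I) = ((-γ : ℝ) : ℂ) * Complex.I := by push_cast; ring
      rw [this, Complex.exp_ofReal_mul_I_re, Real.cos_neg]
    have habs : ‖z ^ 2‖ < 1 := by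
      have h1 : ‖z‖ < 1 := by rw [mem_ball, Complex.dist_eq] at hz; simpa using hz
      rw [norm_pow]; exact pow_lt_one₀ (norm_nonneg z) h1 (by norm_num)
    have hrk := re_key habs
    rw [Complex.add_re, hre, Complex.re_ofReal_mul]
    nlinarith [mul_pos (mul_pos (show (0:ℝ) < 1 - α by linarith) hcos)
      (show (0:ℝ) < 1 + 2 * (z ^ 2 / (1 - z ^ 2)).re by linarith)]
  · rw [hd2]; norm_num
  · rw [hd3, hc]; ring
  · rw [hd2, hd3]
    rw [show (6:ℂ) * c / 6 = c by ring, hc, hμ]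
    rw [show ((1:ℂ) - ↑α) = ((1 - α : ℝ) : ℂ) by push_cast; ring]
    rw [norm_mul, norm_mul, Complex.norm_exp_ofReal_mul_I, Complex.norm_real, Complex.norm_real, Real.norm_eq_abs, Real.norm_eq_abs]
    rw [_root_.abs_of_nonneg (show (0:ℝ) ≤ 1 - α by linarith), _root_.abs_of_nonneg hcos.le]
    norm_num
end
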